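/- arXiv:2405.12655 — 7 statements merged into one kernel-verified Lean document; each statement's English description precedes it below -/
import Mathlib

section
/- Let f : E → ℝ be Lipschitz with constant L ≥ 0 and let x ∈ E. Then the Goldstein subgradient norm ‖g_ε(x)‖ satisfies the following trichotomy: (a) for every ε with 0 ≤ ε < Γf(x) one has ‖g_ε(x)‖ > ε; (b) at ε = Γf(x) one has ‖g_{Γf(x)}(x)‖ ≤ Γf(x); (c) for every ε > Γf(x) one has ‖g_ε(x)‖ < ε. -/
open Filter Topology Metric Set MeasureTheory
open scoped Classical

variable {E : Type*} [NormedAddCommGroup E] [InnerProductSpace ℝ E] [FiniteDimensional ℝ E]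

/-- The Clarke subdifferential: the closed convex hull of all limits of gradients
along sequences of points of differentiability converging to `x`. -/
noncomputable def clarkeSubdiff (f : E → ℝ) (x : E) : Set E :=
  closure (convexHull ℝ {v : E | ∃ u : ℕ → E,
    (∀ n, DifferentiableAt ℝ f (u n)) ∧
    Tendsto u atTop (𝓝 x) ∧
    Tendsto (fun n => gradient f (u n)) atTop (𝓝 v)})

/-- The Goldstein subdifferential of radius `ε`. -/
noncomputable def goldsteinSubdiff (f : E → ℝ) (x : E) (ε : ℝ) : Set E :=
  convexHull ℝ (⋃ y ∈ Metric.closedBall x ε, clarkeSubdiff f y)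

/-- The element of minimal norm of a set (junk value `0` if no minimizer exists). -/
noncomputable def minNorm (s : Set E) : E :=
  if h : ∃ v, v ∈ s ∧ ∀ w ∈ s, ‖v‖ ≤ ‖w‖ then h.choose else 0

/-- The Goldstein subgradient: the minimal-norm element of the Goldstein subdifferential. -/
noncomputable def goldsteinGrad (f : E → ℝ) (x : E) (ε : ℝ) : E :=
  minNorm (goldsteinSubdiff f x ε)

/-- The Goldstein modulus `Γf(x) = inf {ε ≥ 0 : ‖g_ε(x)‖ ≤ ε}`. -/
noncomputable def goldsteinModulus (f : E → ℝ) (x : E) : ℝ :=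
  sInf {ε : ℝ | 0 ≤ ε ∧ ‖goldsteinGrad f x ε‖ ≤ ε}


set_option linter.unusedSectionVars false


lemma myIsCompact_convexHull {s : Set E} (hs : IsCompact s) : IsCompact (convexHull ℝ s) := by
  rcases s.eq_empty_or_nonempty with rfl | ⟨z0, hz0⟩
  · simp only [convexHull_empty]; exact isCompact_empty
  · set n := Module.finrank ℝ E + 1 with hn
    have hT : IsCompact ((stdSimplex ℝ (Fin n)) ×ˢ (Set.univ.pi fun _ : Fin n => s)) :=
      IsCompact.prod (by apply isCompact_stdSimplex) (isCompact_univ_pi fun _ => hs)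
    have hg : Continuous (fun p : (Fin n → ℝ) × (Fin n → E) => ∑ i, p.1 i • p.2 i) := by
      apply continuous_finset_sum
      intro i _
      exact ((continuous_apply i).comp continuous_fst).smul ((continuous_apply i).comp continuous_snd)
    have key : convexHull ℝ s = (fun p : (Fin n → ℝ) × (Fin n → E) => ∑ i, p.1 i • p.2 i) ''
        ((stdSimplex ℝ (Fin n)) ×ˢ (Set.univ.pi fun _ : Fin n => s)) := by
      apply Subset.antisymm
      · intro x hx
        obtain ⟨ι, hfi, z, w, hzs, haff, hwpos, hwsum, hrep⟩ :=
          eq_pos_convex_span_of_mem_convexHull hx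
        letI := hfi
        have hcard : Fintype.card ι ≤ n := by
          refine le_trans haff.card_le_finrank_succ ?_
          have := Submodule.finrank_le (vectorSpan ℝ (Set.range z))
          omega
        obtain ⟨e⟩ : Nonempty (ι ↪ Fin n) :=
          Function.Embedding.nonempty_of_card_le (by rwa [Fintype.card_fin])
        set w' : Fin n → ℝ := fun j => if h : ∃ i, e i = j then w h.choose else 0 with hw'def
        set z' : Fin n → E := fun j => if h : ∃ i, e i = j then z h.choose else z0 with hz'def
        have hwe : ∀ i, w' (e i) = w i := by
          intro i
          have h : ∃ i', e i' = e i := ⟨i, rfl⟩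
          simp only [hw'def, dif_pos h]
          congr 1
          exact e.injective h.choose_spec
        have hze : ∀ i, z' (e i) = z i := by
          intro i
          have h : ∃ i', e i' = e i := ⟨i, rfl⟩
          simp only [hz'def, dif_pos h]
          congr 1
          exact e.injective h.choose_spec
        have hzero : ∀ j ∉ Finset.univ.map e, w' j = 0 := by
          intro j hj
          have : ¬ ∃ i, e i = j := by
            simpa [Finset.mem_map] using hj
          simp [hw'def, dif_neg this]
        have hw'nonneg : ∀ j, 0 ≤ w' j := by
          intro j
          by_cases h : ∃ i, e i = j
          · simp only [hw'def, dif_pos h]; exact (hwpos _).le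
          · simp [hw'def, dif_neg h]
        have hw'sum : ∑ j, w' j = 1 := by
          rw [← Finset.sum_subset (Finset.subset_univ (Finset.univ.map e))
            (fun j _ hj => hzero j hj)]
          rw [Finset.sum_map]
          simp only [hwe]
          exact hwsum
        have hz'mem : ∀ j, z' j ∈ s := by
          intro j
          by_cases h : ∃ i, e i = j
          · simp only [hz'def, dif_pos h]; exact hzs ⟨_, rfl⟩
          · simp only [hz'def, dif_neg h]; exact hz0
        have hrep' : ∑ j, w' j • z' j = x := by
          rw [← Finset.sum_subset (Finset.subset_univ (Finset.univ.map e))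
            (fun j _ hj => by rw [hzero j hj, zero_smul])]
          rw [Finset.sum_map]
          simp only [hwe, hze]
          exact hrep
        exact ⟨(w', z'), ⟨⟨hw'nonneg, hw'sum⟩, fun j _ => hz'mem j⟩, hrep'⟩
      · rintro x ⟨⟨t, v⟩, ⟨⟨ht1, ht2⟩, hv⟩, rfl⟩
        exact (convex_convexHull ℝ s).sum_mem (fun i _ => ht1 i) ht2
          (fun i _ => subset_convexHull ℝ s (hv i (mem_univ i)))
    rw [key]
    exact hT.image hg


def dset (f : E → ℝ) (y : E) : Set E :=
  {v : E | ∃ u : ℕ → E,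
    (∀ n, DifferentiableAt ℝ f (u n)) ∧
    Tendsto u atTop (𝓝 y) ∧
    Tendsto (fun n => gradient f (u n)) atTop (𝓝 v)}

lemma dense_diff {f : E → ℝ} {C : NNReal} (hf : LipschitzWith C f) :
    Dense {z : E | DifferentiableAt ℝ f z} := by
  let _ : MeasurableSpace E := borel E
  have _ : BorelSpace E := ⟨rfl⟩
  let w := Module.Basis.ofVectorSpace ℝ E
  exact Measure.dense_of_ae (hf.ae_differentiableAt (μ := w.addHaar))

lemma grad_norm_le {f : E → ℝ} {L : ℝ} (hL : 0 ≤ L) (hf : LipschitzWith L.toNNReal f) (z : E) :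
    ‖gradient f z‖ ≤ L := by
  have h1 : ‖gradient f z‖ = ‖fderiv ℝ f z‖ := by
    rw [gradient]
    exact (InnerProductSpace.toDual ℝ E).symm.norm_map _
  rw [h1]
  have := norm_fderiv_le_of_lipschitz ℝ hf (x₀ := z)
  rwa [Real.coe_toNNReal L hL] at this

lemma dset_subset_ball {f : E → ℝ} {L : ℝ} (hL : 0 ≤ L) (hf : LipschitzWith L.toNNReal f)
    (y : E) : dset f y ⊆ closedBall 0 L := by
  rintro v ⟨u, hdiff, -, hgrad⟩
  rw [mem_closedBall, dist_zero_right]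
  exact le_of_tendsto (hgrad.norm) (Eventually.of_forall fun n => grad_norm_le hL hf (u n))

lemma dset_nonempty {f : E → ℝ} {L : ℝ} (hL : 0 ≤ L) (hf : LipschitzWith L.toNNReal f)
    (y : E) : (dset f y).Nonempty := by
  have hd := dense_diff hf
  have hz : ∀ n : ℕ, ∃ z : E, DifferentiableAt ℝ f z ∧ dist y z < 1 / (n + 1) := by
    intro n
    have := Metric.mem_closure_iff.mp (hd y) (1 / (n + 1)) (by positivity)
    obtain ⟨b, hb1, hb2⟩ := this
    exact ⟨b, hb1, hb2⟩
  choose z hzd hzdist using hz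
  have hbd : ∀ n, gradient f (z n) ∈ closedBall (0 : E) L := fun n => by
    rw [mem_closedBall, dist_zero_right]; exact grad_norm_le hL hf (z n)
  obtain ⟨v, -, φ, hφ, hconv⟩ :=
    tendsto_subseq_of_bounded isBounded_closedBall hbd
  refine ⟨v, z ∘ φ, fun n => hzd _, ?_, hconv⟩
  · rw [tendsto_iff_dist_tendsto_zero]
    apply squeeze_zero (fun n => dist_nonneg) (g := fun n : ℕ => 1 / (n + 1 : ℝ))
    · intro n
      rw [dist_comm]
      exact le_trans (hzdist (φ n)).le (by
        apply one_div_le_one_div_of_le (by positivity)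
        have h : n ≤ φ n := hφ.le_apply
        have h2 : (n : ℝ) ≤ φ n := by exact_mod_cast h
        linarith)
    · exact tendsto_one_div_add_atTop_nhds_zero_nat

lemma dset_closed_graph {f : E → ℝ} {y : E} {v : E} {yk vk : ℕ → E}
    (hmem : ∀ k, vk k ∈ dset f (yk k)) (hy : Tendsto yk atTop (𝓝 y))
    (hv : Tendsto vk atTop (𝓝 v)) : v ∈ dset f y := by
  have key : ∀ k : ℕ, ∃ z : E, DifferentiableAt ℝ f z ∧ dist z (yk k) < 1 / (k + 1) ∧
      dist (gradient f z) (vk k) < 1 / (k + 1) := by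
    intro k
    obtain ⟨u, hdiff, hu, hg⟩ := hmem k
    have h1 : ∀ᶠ n in atTop, dist (u n) (yk k) < 1 / (k + 1) :=
      hu.eventually (Metric.ball_mem_nhds _ (by positivity) : Metric.ball (yk k) (1/(k+1)) ∈ 𝓝 (yk k))
    have h2 : ∀ᶠ n in atTop, dist (gradient f (u n)) (vk k) < 1 / (k + 1) :=
      hg.eventually (Metric.ball_mem_nhds _ (by positivity))
    obtain ⟨n, hn1, hn2⟩ := (h1.and h2).exists
    exact ⟨u n, hdiff n, hn1, hn2⟩
  choose z hzd hz1 hz2 using key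
  refine ⟨z, hzd, ?_, ?_⟩
  · rw [tendsto_iff_dist_tendsto_zero]
    apply squeeze_zero (fun n => dist_nonneg) (g := fun k => 1 / (k + 1) + dist (yk k) y)
    · intro k; exact (dist_triangle _ _ _).trans (by gcongr; exact (hz1 k).le)
    · simpa using tendsto_one_div_add_atTop_nhds_zero_nat.add
        (tendsto_iff_dist_tendsto_zero.mp hy)
  · rw [tendsto_iff_dist_tendsto_zero]
    apply squeeze_zero (fun n => dist_nonneg) (g := fun k => 1 / (k + 1) + dist (vk k) v)
    · intro k; exact (dist_triangle _ _ _).trans (by gcongr; exact (hz2 k).le)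
    · simpa using tendsto_one_div_add_atTop_nhds_zero_nat.add
        (tendsto_iff_dist_tendsto_zero.mp hv)

def kset (f : E → ℝ) (x : E) (ε : ℝ) : Set E := ⋃ y ∈ closedBall x ε, dset f y

lemma kset_subset_ball {f : E → ℝ} {L : ℝ} (hL : 0 ≤ L) (hf : LipschitzWith L.toNNReal f)
    (x : E) (ε : ℝ) : kset f x ε ⊆ closedBall 0 L :=
  iUnion₂_subset fun y _ => dset_subset_ball hL hf y

lemma kset_nonempty {f : E → ℝ} {L : ℝ} (hL : 0 ≤ L) (hf : LipschitzWith L.toNNReal f)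
    (x : E) {ε : ℝ} (hε : 0 ≤ ε) : (kset f x ε).Nonempty := by
  obtain ⟨v, hv⟩ := dset_nonempty hL hf x
  exact ⟨v, mem_iUnion₂.mpr ⟨x, mem_closedBall_self hε, hv⟩⟩

lemma kset_closed (f : E → ℝ) (x : E) (ε : ℝ) : IsClosed (kset f x ε) := by
  apply IsSeqClosed.isClosed
  intro vk v hvk hv
  have hyk : ∀ k, ∃ y ∈ closedBall x ε, vk k ∈ dset f y := by
    intro k
    obtain ⟨_, ⟨y, rfl⟩, hy⟩ := hvk k
    simp only [mem_iUnion, exists_prop] at hy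
    exact ⟨y, hy.1, hy.2⟩
  choose yk hykball hykmem using hyk
  obtain ⟨y, hyball, φ, hφ, hyconv⟩ := (isCompact_closedBall x ε).tendsto_subseq hykball
  have hv' : Tendsto (vk ∘ φ) atTop (𝓝 v) := hv.comp hφ.tendsto_atTop
  exact mem_iUnion₂.mpr ⟨y, hyball,
    dset_closed_graph (fun k => hykmem (φ k)) hyconv hv'⟩

lemma kset_compact {f : E → ℝ} {L : ℝ} (hL : 0 ≤ L) (hf : LipschitzWith L.toNNReal f)
    (x : E) (ε : ℝ) : IsCompact (kset f x ε) :=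
  (isCompact_closedBall 0 L).of_isClosed_subset (kset_closed f x ε)
    (kset_subset_ball hL hf x ε)

lemma goldstein_eq {f : E → ℝ} {L : ℝ} (hL : 0 ≤ L) (hf : LipschitzWith L.toNNReal f)
    (x : E) (ε : ℝ) : goldsteinSubdiff f x ε = convexHull ℝ (kset f x ε) := by
  have hC : IsCompact (convexHull ℝ (kset f x ε)) :=
    myIsCompact_convexHull (kset_compact hL hf x ε)
  apply Subset.antisymm
  · apply convexHull_min ?_ (convex_convexHull ℝ _)
    apply iUnion₂_subset
    intro y hy
    have h1 : dset f y ⊆ kset f x ε := subset_iUnion₂_of_subset y hy subset_rfl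
    have h2 : clarkeSubdiff f y = closure (convexHull ℝ (dset f y)) := rfl
    rw [h2]
    calc closure (convexHull ℝ (dset f y)) ⊆ closure (convexHull ℝ (kset f x ε)) :=
          closure_mono (convexHull_mono h1)
      _ = convexHull ℝ (kset f x ε) := hC.isClosed.closure_eq
  · apply convexHull_mono
    apply iUnion₂_subset
    intro y hy
    refine subset_iUnion₂_of_subset y hy ?_
    intro v hv
    exact subset_closure (subset_convexHull ℝ _ hv)

lemma minNorm_spec {s : Set E} (hne : s.Nonempty) (hcomp : IsCompact s) :
    minNorm s ∈ s ∧ ∀ w ∈ s, ‖minNorm s‖ ≤ ‖w‖ := by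
  obtain ⟨v, hv, hmin⟩ := hcomp.exists_isMinOn hne continuous_norm.continuousOn
  have h : ∃ v, v ∈ s ∧ ∀ w ∈ s, ‖v‖ ≤ ‖w‖ := ⟨v, hv, fun w hw => hmin hw⟩
  rw [minNorm, dif_pos h]
  exact h.choose_spec

lemma gg_spec {f : E → ℝ} {L : ℝ} (hL : 0 ≤ L) (hf : LipschitzWith L.toNNReal f)
    (x : E) {ε : ℝ} (hε : 0 ≤ ε) :
    goldsteinGrad f x ε ∈ goldsteinSubdiff f x ε ∧
      ∀ w ∈ goldsteinSubdiff f x ε, ‖goldsteinGrad f x ε‖ ≤ ‖w‖ := by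
  rw [goldsteinGrad, goldstein_eq hL hf x ε]
  exact minNorm_spec ((kset_nonempty hL hf x hε).mono (subset_convexHull ℝ _))
    (myIsCompact_convexHull (kset_compact hL hf x ε))

lemma gg_le_L {f : E → ℝ} {L : ℝ} (hL : 0 ≤ L) (hf : LipschitzWith L.toNNReal f)
    (x : E) {ε : ℝ} (hε : 0 ≤ ε) : ‖goldsteinGrad f x ε‖ ≤ L := by
  have h := (gg_spec hL hf x hε).1
  rw [goldstein_eq hL hf x ε] at h
  have : convexHull ℝ (kset f x ε) ⊆ closedBall 0 L := by
    rw [← (convex_closedBall (0:E) L).convexHull_eq]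
    exact convexHull_mono (kset_subset_ball hL hf x ε)
  simpa [mem_closedBall, dist_zero_right] using this h

lemma goldstein_mono (f : E → ℝ) (x : E) {ε δ : ℝ} (h : ε ≤ δ) :
    goldsteinSubdiff f x ε ⊆ goldsteinSubdiff f x δ :=
  convexHull_mono (iUnion₂_subset fun y hy =>
    subset_iUnion₂_of_subset y (closedBall_subset_closedBall h hy) subset_rfl)

lemma gg_mono {f : E → ℝ} {L : ℝ} (hL : 0 ≤ L) (hf : LipschitzWith L.toNNReal f)
    (x : E) {ε δ : ℝ} (hε : 0 ≤ ε) (h : ε ≤ δ) :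
    ‖goldsteinGrad f x δ‖ ≤ ‖goldsteinGrad f x ε‖ :=
  (gg_spec hL hf x (hε.trans h)).2 _ (goldstein_mono f x h (gg_spec hL hf x hε).1)


theorem stmt2 (f : E → ℝ) (L : ℝ) (hL : 0 ≤ L) (hf : LipschitzWith L.toNNReal f) (x : E) :
    (∀ ε : ℝ, 0 ≤ ε → ε < goldsteinModulus f x → ε < ‖goldsteinGrad f x ε‖) ∧
    ‖goldsteinGrad f x (goldsteinModulus f x)‖ ≤ goldsteinModulus f x ∧
    (∀ ε : ℝ, goldsteinModulus f x < ε → ‖goldsteinGrad f x ε‖ < ε) := by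
  set S : Set ℝ := {ε : ℝ | 0 ≤ ε ∧ ‖goldsteinGrad f x ε‖ ≤ ε} with hSdef
  have hΓdef : goldsteinModulus f x = sInf S := rfl
  have hbdd : BddBelow S := ⟨0, fun y hy => hy.1⟩
  have hSne : S.Nonempty := ⟨L, hL, gg_le_L hL hf x hL⟩
  have hΓ0 : 0 ≤ goldsteinModulus f x := by
    rw [hΓdef]; exact le_csInf hSne fun y hy => hy.1
  have parta : ∀ ε : ℝ, 0 ≤ ε → ε < goldsteinModulus f x → ε < ‖goldsteinGrad f x ε‖ := by
    intro ε hε hlt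
    by_contra hcon
    push_neg at hcon
    exact absurd (csInf_le hbdd ⟨hε, hcon⟩) (not_le.mpr hlt)
  have partc : ∀ ε : ℝ, goldsteinModulus f x < ε → ‖goldsteinGrad f x ε‖ < ε := by
    intro ε hlt
    obtain ⟨δ, hδS, hδlt⟩ := exists_lt_of_csInf_lt hSne hlt
    calc ‖goldsteinGrad f x ε‖ ≤ ‖goldsteinGrad f x δ‖ := gg_mono hL hf x hδS.1 hδlt.le
      _ ≤ δ := hδS.2
      _ < ε := hδlt
  refine ⟨parta, ?_, partc⟩
  -- part (b)
  set Γ := goldsteinModulus f x with hΓ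
  set εn : ℕ → ℝ := fun k => Γ + 1 / (k + 1) with hεn
  have hεnpos : ∀ k, Γ < εn k := fun k => by
    show Γ < Γ + 1 / (k + 1)
    have h : (0:ℝ) < 1 / (k+1) := by positivity
    linarith
  have hεnn : ∀ k, 0 ≤ εn k := fun k => hΓ0.trans (hεnpos k).le
  have hεantitone : ∀ m N : ℕ, N ≤ m → εn m ≤ εn N := by
    intro m N h
    show Γ + 1/(m+1) ≤ Γ + 1/(N+1)
    have : (1:ℝ)/(m+1) ≤ 1/(N+1) := by
      apply one_div_le_one_div_of_le (by positivity)
      have : (N:ℝ) ≤ m := by exact_mod_cast h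
      linarith
    linarith
  have hεtend : Tendsto εn atTop (𝓝 Γ) := by
    rw [hεn]
    simpa using tendsto_const_nhds.add (tendsto_one_div_add_atTop_nhds_zero_nat :
      Tendsto (fun n : ℕ => 1 / ((n : ℝ) + 1)) atTop (𝓝 0))
  set vk : ℕ → E := fun k => goldsteinGrad f x (εn k) with hvk
  have hvknorm : ∀ k, ‖vk k‖ ≤ εn k := fun k => (partc (εn k) (hεnpos k)).le
  have hvkmem : ∀ k, vk k ∈ convexHull ℝ (kset f x (εn k)) := fun k => by
    show goldsteinGrad f x (εn k) ∈ _
    rw [← goldstein_eq hL hf x (εn k)]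
    exact (gg_spec hL hf x (hεnn k)).1
  have hvkball : ∀ k, vk k ∈ closedBall (0:E) L := fun k => by
    rw [mem_closedBall, dist_zero_right]; exact gg_le_L hL hf x (hεnn k)
  obtain ⟨v, -, φ, hφ, hvconv⟩ := tendsto_subseq_of_bounded isBounded_closedBall hvkball
  -- outer semicontinuity
  have osc : ∀ δ : ℝ, 0 < δ → ∃ N : ℕ, kset f x (εn N) ⊆ thickening δ (kset f x Γ) := by
    intro δ hδ
    by_contra hcon
    push_neg at hcon
    have hKΓne : (kset f x Γ).Nonempty := kset_nonempty hL hf x hΓ0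
    have hw : ∀ N : ℕ, ∃ w ∈ kset f x (εn N), δ ≤ infDist w (kset f x Γ) := by
      intro N
      obtain ⟨w, hw1, hw2⟩ := not_subset.mp (hcon N)
      refine ⟨w, hw1, ?_⟩
      by_contra h
      push_neg at h
      exact hw2 ((Metric.mem_thickening_iff_infDist_lt hKΓne).mpr h)
    choose w hwmem hwdist using hw
    have hyk : ∀ N, ∃ y ∈ closedBall x (εn N), w N ∈ dset f y := by
      intro N
      obtain ⟨_, ⟨y, rfl⟩, hy⟩ := hwmem N
      simp only [mem_iUnion, exists_prop] at hy
      exact ⟨y, hy.1, hy.2⟩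
    choose yk hykball hykmem using hyk
    have hykbig : ∀ N, yk N ∈ closedBall x (Γ + 1) := fun N =>
      closedBall_subset_closedBall (by
        have h := hεantitone N 0 (Nat.zero_le N)
        have h2 : εn 0 = Γ + 1 := by show Γ + 1/((0:ℕ)+1) = Γ + 1; norm_num
        linarith) (hykball N)
    obtain ⟨ylim, hylim, ψ, hψ, hyconv⟩ := (isCompact_closedBall x (Γ+1)).tendsto_subseq hykbig
    have hwball : ∀ N, w N ∈ closedBall (0:E) L := fun N => by
      obtain ⟨_, ⟨y, rfl⟩, hy⟩ := hwmem N
      simp only [mem_iUnion, exists_prop] at hy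
      exact dset_subset_ball hL hf y hy.2
    obtain ⟨wlim, -, ψ2, hψ2, hwconv⟩ :=
      tendsto_subseq_of_bounded isBounded_closedBall (fun N => hwball (ψ N))
    have hyconv2 : Tendsto (fun k => yk (ψ (ψ2 k))) atTop (𝓝 ylim) :=
      hyconv.comp hψ2.tendsto_atTop
    -- ylim ∈ closedBall x Γ
    have hylimΓ : ylim ∈ closedBall x Γ := by
      rw [mem_closedBall]
      have hle : ∀ k, dist (yk (ψ (ψ2 k))) x ≤ εn k := by
        intro k
        have h1 : dist (yk (ψ (ψ2 k))) x ≤ εn (ψ (ψ2 k)) := hykball _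
        exact h1.trans (hεantitone _ k ((hψ2.le_apply).trans (hψ.le_apply)))
      have hdt : Tendsto (fun k => dist (yk (ψ (ψ2 k))) x) atTop (𝓝 (dist ylim x)) :=
        hyconv2.dist tendsto_const_nhds
      exact le_of_tendsto_of_tendsto' hdt hεtend hle
    have hwlimmem : wlim ∈ dset f ylim :=
      dset_closed_graph (fun k => hykmem (ψ (ψ2 k))) hyconv2 hwconv
    have hwlimK : wlim ∈ kset f x Γ := mem_iUnion₂.mpr ⟨ylim, hylimΓ, hwlimmem⟩
    have hinf : δ ≤ infDist wlim (kset f x Γ) := by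
      have hcont : Tendsto (fun k => infDist (w (ψ (ψ2 k))) (kset f x Γ)) atTop
          (𝓝 (infDist wlim (kset f x Γ))) :=
        ((continuous_infDist_pt (kset f x Γ)).continuousAt.tendsto.comp hwconv)
      exact ge_of_tendsto hcont (Eventually.of_forall fun k => hwdist _)
    rw [infDist_zero_of_mem hwlimK] at hinf
    linarith
  -- v ∈ convexHull (kset f x Γ)
  have hvmem : v ∈ convexHull ℝ (kset f x Γ) := by
    have hclosedhull : IsClosed (convexHull ℝ (kset f x Γ)) :=
      (myIsCompact_convexHull (kset_compact hL hf x Γ)).isClosed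
    rw [← hclosedhull.closure_eq, closure_eq_iInter_cthickening]
    refine mem_iInter₂.mpr fun δ hδ => ?_
    obtain ⟨N, hN⟩ := osc δ hδ
    have hsub : convexHull ℝ (kset f x (εn N)) ⊆ cthickening δ (convexHull ℝ (kset f x Γ)) := by
      apply convexHull_min
      · refine hN.trans ((thickening_subset_of_subset δ (subset_convexHull ℝ _)).trans
          (thickening_subset_cthickening δ _))
      · exact ((convex_convexHull ℝ _).cthickening δ)
    have hvN : ∀ k, N ≤ k → vk (φ k) ∈ cthickening δ (convexHull ℝ (kset f x Γ)) := by
      intro k hk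
      apply hsub
      have : convexHull ℝ (kset f x (εn (φ k))) ⊆ convexHull ℝ (kset f x (εn N)) := by
        apply convexHull_mono
        apply iUnion₂_subset
        intro y hy
        exact subset_iUnion₂_of_subset y
          (closedBall_subset_closedBall (hεantitone _ N (hk.trans hφ.le_apply)) hy) subset_rfl
      exact this (hvkmem (φ k))
    exact (isClosed_cthickening).mem_of_tendsto hvconv
      ((eventually_atTop.mpr ⟨N, hvN⟩))
  -- conclude
  have hvnorm : ‖v‖ ≤ Γ := by
    have h1 : Tendsto (fun k => ‖vk (φ k)‖) atTop (𝓝 ‖v‖) := hvconv.norm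
    refine le_of_tendsto_of_tendsto' h1 hεtend fun k => ?_
    exact (hvknorm (φ k)).trans (hεantitone _ k hφ.le_apply)
  have hmin := (gg_spec hL hf x hΓ0).2 v (by rw [goldstein_eq hL hf x Γ]; exact hvmem)
  exact hmin.trans hvnorm
end

section
/- Let f : E → ℝ be Lipschitz with constant L ≥ 0, let x ∈ E, and let ε be any radius with 0 < ε < Γf(x). Then the Goldstein subgradient g := g_ε(x) is nonzero, and the Goldstein update x⁺ := x − (ε/‖g‖)·g decreases the objective by more than ε², i.e. f(x⁺) < f(x) − ε². -/
open Filter Topology Metric Set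
open scoped Classical

variable {E : Type*} [NormedAddCommGroup E] [InnerProductSpace ℝ E] [FiniteDimensional ℝ E]

open MeasureTheory intervalIntegral
open scoped RealInnerProductSpace

private lemma slope_tendsto_aux' {G : ℝ → ℝ} {d t : ℝ} (hG : HasDerivAt G d t) :
    Tendsto (fun n : ℕ => (G (t + 1 / (n + 1)) - G t) / (1 / (n + 1))) atTop (𝓝 d) := by
  have h1 : Tendsto (fun n : ℕ => t + 1 / ((n : ℝ) + 1)) atTop (𝓝[≠] t) := by
    apply tendsto_nhdsWithin_of_tendsto_nhds_of_eventually_within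
    · have := tendsto_one_div_add_atTop_nhds_zero_nat (𝕜 := ℝ)
      simpa using tendsto_const_nhds.add this
    · refine Eventually.of_forall fun n => ?_
      have : (0:ℝ) < 1 / ((n:ℝ) + 1) := by positivity
      simp only [Set.mem_compl_iff, Set.mem_singleton_iff]
      intro h
      nlinarith [h]
  have := (hasDerivAt_iff_tendsto_slope.1 hG).comp h1
  refine this.congr fun n => ?_
  simp [slope_def_field, Function.comp]

/-- Fundamental-theorem-of-calculus type inequality for Lipschitz functions on `ℝ`
with almost everywhere bounded derivative. -/
private lemma lipschitz_sub_le' {φ : ℝ → ℝ} {K : NNReal} (hφ : LipschitzWith K φ) {a b c : ℝ}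
    (hab : a ≤ b) (hder : ∀ᵐ t, t ∈ Set.Ioo a b → deriv φ t ≤ c) :
    φ b - φ a ≤ c * (b - a) := by
  rcases eq_or_lt_of_le hab with rfl | hab
  · simp
  have hcont : Continuous φ := hφ.continuous
  have hint : ∀ u v : ℝ, IntervalIntegrable φ volume u v := fun u v =>
    hcont.intervalIntegrable u v
  set h : ℕ → ℝ := fun n => 1 / ((n : ℝ) + 1) with hh
  have hpos : ∀ n, 0 < h n := fun n => by positivity
  have bdry : ∀ p : ℝ, Tendsto (fun n => (∫ t in p..(p + h n), φ t) / h n) atTop (𝓝 (φ p)) := by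
    intro p
    have hG : HasDerivAt (fun u => ∫ t in p..u, φ t) (φ p) p :=
      integral_hasDerivAt_right (hint p p)
        (hcont.stronglyMeasurableAtFilter _ _) hcont.continuousAt
    have := slope_tendsto_aux' hG
    refine this.congr fun n => ?_
    simp only [integral_same, sub_zero, hh]
  have key : ∀ n : ℕ, (∫ t in a..b, (φ (t + h n) - φ t) / h n) =
      (∫ t in b..(b + h n), φ t) / h n - (∫ t in a..(a + h n), φ t) / h n := by
    intro n
    have h2 : IntervalIntegrable (fun t => φ (t + h n)) volume a b :=
      (hcont.comp (continuous_id.add continuous_const)).intervalIntegrable a b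
    have h3 : (∫ t in a..b, φ (t + h n)) = ∫ t in (a + h n)..(b + h n), φ t :=
      integral_comp_add_right φ (h n)
    have c1 : (∫ t in a..(a + h n), φ t) + (∫ t in (a + h n)..(b + h n), φ t)
        = ∫ t in a..(b + h n), φ t := integral_add_adjacent_intervals (hint _ _) (hint _ _)
    have c2 : (∫ t in a..b, φ t) + (∫ t in b..(b + h n), φ t)
        = ∫ t in a..(b + h n), φ t := integral_add_adjacent_intervals (hint _ _) (hint _ _)
    have : (∫ t in a..b, (φ (t + h n) - φ t)) =
        (∫ t in b..(b + h n), φ t) - (∫ t in a..(a + h n), φ t) := by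
      rw [integral_sub h2 (hint a b), h3]
      linarith
    calc (∫ t in a..b, (φ (t + h n) - φ t) / h n)
        = (∫ t in a..b, (φ (t + h n) - φ t)) / h n := by
          rw [intervalIntegral.integral_div]
      _ = _ := by rw [this, sub_div]
  have lim1 : Tendsto (fun n => ∫ t in a..b, (φ (t + h n) - φ t) / h n) atTop
      (𝓝 (φ b - φ a)) := by
    simp only [key]
    exact (bdry b).sub (bdry a)
  have hae : ∀ᵐ t : ℝ, DifferentiableAt ℝ φ t := hφ.ae_differentiableAt
  have lim2 : Tendsto (fun n => ∫ t in a..b, (φ (t + h n) - φ t) / h n) atTop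
      (𝓝 (∫ t in a..b, deriv φ t)) := by
    apply intervalIntegral.tendsto_integral_filter_of_dominated_convergence (fun _ => (K : ℝ))
    · exact Eventually.of_forall fun n =>
        ((hcont.comp (continuous_id.add continuous_const)).sub hcont
          |>.div_const _).aestronglyMeasurable
    · refine Eventually.of_forall fun n => Eventually.of_forall fun t _ => ?_
      have := hφ.dist_le_mul (t + h n) t
      rw [Real.dist_eq, Real.dist_eq] at this
      have h4 : |t + h n - t| = h n := by
        rw [add_sub_cancel_left, abs_of_pos (hpos n)]
      rw [h4] at this
      rw [Real.norm_eq_abs, abs_div, abs_of_pos (hpos n), div_le_iff₀ (hpos n)]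
      linarith
    · exact intervalIntegrable_const
    · filter_upwards [hae] with t ht _
      exact slope_tendsto_aux' ht.hasDerivAt
  have heq : φ b - φ a = ∫ t in a..b, deriv φ t := tendsto_nhds_unique lim1 lim2
  have hKd : ∀ t, ‖deriv φ t‖ ≤ (K : ℝ) := fun t => norm_deriv_le_of_lipschitz hφ
  have hder_int : IntervalIntegrable (deriv φ) volume a b := by
    rw [intervalIntegrable_iff, uIoc_of_le hab.le]
    refine ⟨(measurable_deriv φ).aestronglyMeasurable.restrict, ?_⟩
    exact HasFiniteIntegral.of_bounded (C := (K : ℝ)) (ae_of_all _ hKd)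
  have hmono : (∫ t in a..b, deriv φ t) ≤ ∫ t in a..b, c := by
    apply integral_mono_ae_restrict hab.le hder_int intervalIntegrable_const
    have hIoo : Ioo a b =ᵐ[volume] Icc a b := Ioo_ae_eq_Icc
    filter_upwards [ae_restrict_of_ae hder, ae_restrict_of_ae hIoo.mem_iff,
      ae_restrict_mem measurableSet_Icc] with t h1 h2 h3
    exact h1 (h2.2 h3)
  rw [heq]
  calc (∫ t in a..b, deriv φ t) ≤ ∫ t in a..b, c := hmono
    _ = c * (b - a) := by simp [mul_comm]

/-- The variational inequality for the minimal norm element of a convex set. -/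
private lemma min_norm_inner' {s : Set E} (hs : Convex ℝ s) {g v : E} (hg : g ∈ s)
    (hmin : ∀ w ∈ s, ‖g‖ ≤ ‖w‖) (hv : v ∈ s) : ‖g‖ ^ 2 ≤ ⟪v, g⟫ := by
  by_contra hlt
  push_neg at hlt
  set c : ℝ := ‖g‖ ^ 2 - ⟪v, g⟫ with hc
  have hc0 : 0 < c := by simp [hc]; linarith
  have hvg : v - g ≠ 0 := by
    intro h
    rw [sub_eq_zero] at h
    subst h
    rw [real_inner_self_eq_norm_sq] at hlt
    linarith
  have hnorm : 0 < ‖v - g‖ ^ 2 := by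
    have := norm_pos_iff.mpr hvg
    positivity
  set t : ℝ := min 1 (c / ‖v - g‖ ^ 2) with ht
  have ht0 : 0 < t := lt_min one_pos (div_pos hc0 hnorm)
  have ht1 : t ≤ 1 := min_le_left _ _
  have hmem : g + t • (v - g) ∈ s := by
    have : g + t • (v - g) = (1 - t) • g + t • v := by
      rw [smul_sub]; module
    rw [this]
    exact hs hg hv (by linarith) ht0.le (by ring)
  have hexp : ‖g + t • (v - g)‖ ^ 2 =
      ‖g‖ ^ 2 + 2 * (t * ⟪g, v - g⟫) + t ^ 2 * ‖v - g‖ ^ 2 := by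
    rw [norm_add_sq_real, real_inner_smul_right, norm_smul]
    rw [Real.norm_eq_abs, abs_of_pos ht0]
    ring
  have hle : ‖g‖ ^ 2 ≤ ‖g + t • (v - g)‖ ^ 2 := by
    have := hmin _ hmem
    nlinarith [norm_nonneg g]
  have hinner : ⟪g, v - g⟫ = -c := by
    rw [inner_sub_right, real_inner_self_eq_norm_sq, real_inner_comm]
    simp [hc]
  rw [hexp, hinner] at hle
  have htc : t * ‖v - g‖ ^ 2 ≤ c := by
    rcases min_cases 1 (c / ‖v - g‖ ^ 2) with ⟨h1, h2⟩ | ⟨h1, h2⟩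
    · have h2' : ‖v - g‖ ^ 2 ≤ c := by
        rw [le_div_iff₀ hnorm] at h2
        linarith
      calc t * ‖v - g‖ ^ 2 = ‖v - g‖ ^ 2 := by rw [ht, h1, one_mul]
        _ ≤ c := h2'
    · calc t * ‖v - g‖ ^ 2 = (c / ‖v - g‖ ^ 2) * ‖v - g‖ ^ 2 := by rw [ht, h1]
        _ ≤ c := le_of_eq (div_mul_cancel₀ c hnorm.ne')
  nlinarith

/-- The gradient at any point of differentiability inside the ball belongs to the
Goldstein subdifferential. -/
private lemma gradient_mem_goldstein' {f : E → ℝ} {x z : E} {ε : ℝ}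
    (hz : z ∈ Metric.closedBall x ε) (hd : DifferentiableAt ℝ f z) :
    gradient f z ∈ goldsteinSubdiff f x ε := by
  have h1 : gradient f z ∈ clarkeSubdiff f z := by
    apply subset_closure
    apply subset_convexHull
    exact ⟨fun _ => z, fun _ => hd, tendsto_const_nhds, tendsto_const_nhds⟩
  exact subset_convexHull ℝ _ (Set.mem_biUnion hz h1)

set_option maxHeartbeats 1000000 in
theorem stmt5 (f : E → ℝ) (L : ℝ) (hL : 0 ≤ L) (hf : LipschitzWith L.toNNReal f)
    (x : E) (ε : ℝ) (hε : 0 < ε) (hεΓ : ε < goldsteinModulus f x) :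
    goldsteinGrad f x ε ≠ 0 ∧
    f (x - (ε / ‖goldsteinGrad f x ε‖) • goldsteinGrad f x ε) < f x - ε ^ 2 := by
  obtain ⟨g, hgdef⟩ : ∃ g : E, goldsteinGrad f x ε = g := ⟨_, rfl⟩
  rw [hgdef]
  -- Step 1: ε < ‖g‖
  have hεg : ε < ‖g‖ := by
    by_contra h
    push_neg at h
    have hmem : ε ∈ {ε' : ℝ | 0 ≤ ε' ∧ ‖goldsteinGrad f x ε'‖ ≤ ε'} := ⟨hε.le, by rw [hgdef]; exact h⟩
    have : goldsteinModulus f x ≤ ε :=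
      csInf_le ⟨0, fun y hy => hy.1⟩ hmem
    linarith
  have hgn : 0 < ‖g‖ := lt_trans hε hεg
  have hg0 : g ≠ 0 := fun h => by rw [h, norm_zero] at hgn; exact lt_irrefl 0 hgn
  refine ⟨hg0, ?_⟩
  -- Step 2: the minimal norm property of g
  have hex : ∃ v, v ∈ goldsteinSubdiff f x ε ∧ ∀ w ∈ goldsteinSubdiff f x ε, ‖v‖ ≤ ‖w‖ := by
    by_contra hne
    have : g = 0 := by
      rw [← hgdef, goldsteinGrad, minNorm, dif_neg]
      exact hne
    exact hg0 this
  have hgS : g ∈ goldsteinSubdiff f x ε ∧ ∀ w ∈ goldsteinSubdiff f x ε, ‖g‖ ≤ ‖w‖ := by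
    have : g = hex.choose := by
      rw [← hgdef, goldsteinGrad, minNorm, dif_pos hex]
    rw [this]
    exact hex.choose_spec
  -- Step 3: the key inner product inequality
  have key : ∀ z ∈ Metric.closedBall x ε, DifferentiableAt ℝ f z →
      ‖g‖ ^ 2 ≤ ⟪gradient f z, g⟫ := fun z hz hdz =>
    min_norm_inner' (convex_convexHull ℝ _) hgS.1 hgS.2 (gradient_mem_goldstein' hz hdz)
  -- the unit direction
  obtain ⟨u, hudef⟩ : ∃ u : E, u = ‖g‖⁻¹ • g := ⟨_, rfl⟩
  have hu : ‖u‖ = 1 := by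
    rw [hudef, norm_smul, Real.norm_eq_abs, abs_of_pos (inv_pos.2 hgn), inv_mul_cancel₀ hgn.ne']
  -- the radius δ
  obtain ⟨δ, hδdef⟩ : ∃ δ : ℝ, δ = (ε * ‖g‖ - ε ^ 2) / (3 * L + ‖g‖ + 1) := ⟨_, rfl⟩
  have hden : 0 < 3 * L + ‖g‖ + 1 := by linarith
  have hnum : 0 < ε * ‖g‖ - ε ^ 2 := by nlinarith
  have hδpos : 0 < δ := hδdef ▸ div_pos hnum hden
  have hδmul : δ * (3 * L + ‖g‖ + 1) = ε * ‖g‖ - ε ^ 2 := hδdef ▸ div_mul_cancel₀ _ hden.ne'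
  have hδε : δ < ε := by nlinarith
  -- Step 4: Fubini — find a good starting point y near x
  borelize E
  have hrad : volume {z : E | ¬ DifferentiableAt ℝ f z} = 0 := by
    have h := hf.ae_differentiableAt (μ := volume)
    rwa [ae_iff] at h
  have hDmeas : MeasurableSet {z : E | DifferentiableAt ℝ f z} :=
    measurableSet_of_differentiableAt ℝ f
  obtain ⟨B, hBdef⟩ : ∃ B : Set (ℝ × E),
      B = (fun p : ℝ × E => p.2 - p.1 • u) ⁻¹' {z | DifferentiableAt ℝ f z}ᶜ := ⟨_, rfl⟩
  have hcB : Continuous fun p : ℝ × E => p.2 - p.1 • u :=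
    continuous_snd.sub (continuous_fst.smul continuous_const)
  have hBmeas : MeasurableSet B := hBdef ▸ hDmeas.compl.preimage hcB.measurable
  have hBnull : ((volume : Measure ℝ).prod (volume : Measure E)) B = 0 := by
    rw [MeasureTheory.Measure.measure_prod_null hBmeas]
    refine Filter.Eventually.of_forall fun t => ?_
    have heq : Prod.mk t ⁻¹' B = (fun z : E => z + -(t • u)) ⁻¹' {z | ¬ DifferentiableAt ℝ f z} := by
      ext z
      simp [hBdef, sub_eq_add_neg]
    show volume (Prod.mk t ⁻¹' B) = 0
    rw [heq, measure_preimage_add_right]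
    exact hrad
  have hswapnull : ((volume : Measure E).prod (volume : Measure ℝ)) (Prod.swap ⁻¹' B) = 0 := by
    rw [← Measure.map_apply measurable_swap hBmeas, MeasureTheory.Measure.prod_swap]
    exact hBnull
  have haeprod : ∀ᵐ p : E × ℝ ∂((volume : Measure E).prod (volume : Measure ℝ)),
      DifferentiableAt ℝ f (p.1 - p.2 • u) := by
    have hseteq : {p : E × ℝ | ¬ DifferentiableAt ℝ f (p.1 - p.2 • u)} = Prod.swap ⁻¹' B := by
      rw [hBdef]
      ext p
      simp
    rw [ae_iff, hseteq]
    exact hswapnull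
  have haegood : ∀ᵐ y : E ∂volume, ∀ᵐ t : ℝ ∂volume, DifferentiableAt ℝ f (y - t • u) :=
    Measure.ae_ae_of_ae_prod haeprod
  have hYnull : volume {y : E | ¬ ∀ᵐ t : ℝ ∂volume, DifferentiableAt ℝ f (y - t • u)} = 0 := by
    rwa [ae_iff] at haegood
  obtain ⟨y, hyball, hyY⟩ : ∃ y, y ∈ Metric.closedBall x δ ∧
      ∀ᵐ t : ℝ ∂volume, DifferentiableAt ℝ f (y - t • u) := by
    by_contra hcon
    push_neg at hcon
    have hsub : Metric.closedBall x δ ⊆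
        {y : E | ¬ ∀ᵐ t : ℝ ∂volume, DifferentiableAt ℝ f (y - t • u)} := fun y hy => Filter.not_eventually.mpr (hcon y hy)
    have := measure_mono_null hsub hYnull
    exact (measure_closedBall_pos volume x hδpos).ne' this
  have hyx : ‖y - x‖ ≤ δ := by rwa [Metric.mem_closedBall, dist_eq_norm] at hyball
  -- Step 5: the descent estimate along the segment from y
  obtain ⟨φ, hφdef⟩ : ∃ φ : ℝ → ℝ, φ = fun t => f (y - t • u) := ⟨_, rfl⟩
  have hφlip : LipschitzWith L.toNNReal φ := by
    have hlip1 : LipschitzWith 1 (fun t : ℝ => y - t • u) := by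
      apply LipschitzWith.of_dist_le_mul
      intro s t
      rw [dist_eq_norm]
      have : (y - s • u) - (y - t • u) = (t - s) • u := by module
      rw [this, norm_smul, hu, mul_one, Real.norm_eq_abs, Real.dist_eq, abs_sub_comm]
      rw [NNReal.coe_one, one_mul]
    have := hf.comp hlip1
    rw [mul_one] at this
    rwa [hφdef]
  have hLcoe : (L.toNNReal : ℝ) = L := Real.coe_toNNReal L hL
  have hmain : φ (ε - δ) - φ 0 ≤ (-‖g‖) * ((ε - δ) - 0) := by
    apply lipschitz_sub_le' hφlip (by linarith)
    filter_upwards [hyY] with t ht htIoo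
    obtain ⟨z, hzdef⟩ : ∃ z : E, z = y - t • u := ⟨_, rfl⟩
    have hzball : z ∈ Metric.closedBall x ε := by
      rw [Metric.mem_closedBall, dist_eq_norm]
      have h1 : z - x = (y - x) - t • u := by rw [hzdef]; module
      calc ‖z - x‖ = ‖(y - x) - t • u‖ := by rw [h1]
        _ ≤ ‖y - x‖ + ‖t • u‖ := norm_sub_le _ _
        _ = ‖y - x‖ + |t| := by rw [norm_smul, hu, mul_one, Real.norm_eq_abs]
        _ ≤ δ + (ε - δ) := by
            have h2 : |t| ≤ ε - δ := by
              rw [abs_of_pos htIoo.1]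
              exact htIoo.2.le
            linarith
        _ = ε := by ring
    have hc : HasDerivAt (fun s : ℝ => y - s • u) (-u) t := by
      have h1 : HasDerivAt (fun s : ℝ => s • u) ((1:ℝ) • u) t :=
        (hasDerivAt_id t).smul_const u
      have h2 := h1.const_sub y
      simpa using h2
    have hφt : HasDerivAt φ (fderiv ℝ f z (-u)) t := by
      rw [hφdef]
      have ht' : DifferentiableAt ℝ f ((fun s : ℝ => y - s • u) t) := by
        simpa [← hzdef] using ht
      have := ht'.hasFDerivAt.comp_hasDerivAt t hc
      rw [hzdef]; exact this
    rw [hφt.deriv]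
    have hgrad : fderiv ℝ f z (-u) = ⟪gradient f z, -u⟫ := by
      rw [gradient, InnerProductSpace.toDual_symm_apply]
    rw [hgrad]
    have hinner : ⟪gradient f z, -u⟫ = -(‖g‖⁻¹ * ⟪gradient f z, g⟫) := by
      rw [hudef, inner_neg_right, real_inner_smul_right]
    rw [hinner]
    have hk := key z hzball (hzdef ▸ ht)
    have h5 : ‖g‖⁻¹ * ‖g‖ ^ 2 ≤ ‖g‖⁻¹ * ⟪gradient f z, g⟫ :=
      mul_le_mul_of_nonneg_left hk (inv_nonneg.2 hgn.le)
    have h6 : ‖g‖⁻¹ * ‖g‖ ^ 2 = ‖g‖ := by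
      field_simp
    linarith
  -- Step 6: conclude by Lipschitz comparison
  have hLip : ∀ a b : E, f a - f b ≤ L * ‖a - b‖ := by
    intro a b
    have h1 := hf.dist_le_mul a b
    rw [Real.dist_eq, dist_eq_norm, hLcoe] at h1
    calc f a - f b ≤ |f a - f b| := le_abs_self _
      _ ≤ L * ‖a - b‖ := h1
  have hφ0 : φ 0 = f y := by rw [hφdef]; simp
  have hφεδ : φ (ε - δ) = f (y - (ε - δ) • u) := by rw [hφdef]
  have hxplus : x - (ε / ‖g‖) • g = x - ε • u := by
    rw [hudef, smul_smul, div_eq_mul_inv]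
  rw [hxplus]
  have hd1 : f (x - ε • u) - f (y - (ε - δ) • u) ≤ L * (2 * δ) := by
    have h1 : (x - ε • u) - (y - (ε - δ) • u) = (x - y) - δ • u := by module
    have h2 : ‖(x - ε • u) - (y - (ε - δ) • u)‖ ≤ 2 * δ := by
      rw [h1]
      calc ‖(x - y) - δ • u‖ ≤ ‖x - y‖ + ‖δ • u‖ := norm_sub_le _ _
        _ = ‖x - y‖ + δ := by
            rw [norm_smul, hu, mul_one, Real.norm_eq_abs, abs_of_pos hδpos]
        _ ≤ δ + δ := by
            have := hyx
            rw [← norm_neg, neg_sub] at this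
            linarith
        _ = 2 * δ := by ring
    calc f (x - ε • u) - f (y - (ε - δ) • u) ≤ L * ‖(x - ε • u) - (y - (ε - δ) • u)‖ :=
          hLip _ _
      _ ≤ L * (2 * δ) := mul_le_mul_of_nonneg_left h2 hL
  have hd2 : f y - f x ≤ L * δ := by
    calc f y - f x ≤ L * ‖y - x‖ := hLip _ _
      _ ≤ L * δ := mul_le_mul_of_nonneg_left hyx hL
  have hd3 : f (y - (ε - δ) • u) - f y ≤ -‖g‖ * (ε - δ) := by
    have := hmain
    rw [hφ0, hφεδ] at this
    linarith [this]
  -- combine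
  have hfinal : f (x - ε • u) ≤ f x + 3 * L * δ - ‖g‖ * (ε - δ) := by
    linarith [hd1, hd2, hd3]
  have hgap : 3 * L * δ - ‖g‖ * (ε - δ) < -ε ^ 2 := by
    have h1 : 3 * L * δ - ‖g‖ * (ε - δ) = δ * (3 * L + ‖g‖ + 1) - δ - ‖g‖ * ε := by ring
    rw [h1, hδmul]
    nlinarith
  linarith
end

section
/- Let f : E → ℝ be Lipschitz with constant L ≥ 0, let x ∈ E and ε > 0, and suppose the Goldstein subgradient g := g_ε(x) is nonzero. Then the Goldstein update x⁺ := x − (ε/‖g‖)·g satisfies the descent property f(x⁺) ≤ f(x) − ε‖g‖. -/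
open Filter Topology Metric Set
open scoped Classical

variable {E : Type*} [NormedAddCommGroup E] [InnerProductSpace ℝ E] [FiniteDimensional ℝ E]

section Aux

open MeasureTheory
open scoped NNReal

/-- A minimal-norm element `g` of a convex set satisfies `⟪g, v⟫ ≥ ‖g‖²` for every `v`
in the set. -/
theorem aux_minNorm_inner (s : Set E) (hconv : Convex ℝ s) (g : E) (hg : g ∈ s)
    (hmin : ∀ w ∈ s, ‖g‖ ≤ ‖w‖) (v : E) (hv : v ∈ s) : ‖g‖ ^ 2 ≤ inner ℝ g v := by
  have key : ∀ t : ℝ, 0 < t → t ≤ 1 → 0 ≤ 2 * inner ℝ g (v - g) + t * ‖v - g‖ ^ 2 := by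
    intro t ht ht1
    have hmem : g + t • (v - g) ∈ s := by
      have := hconv hg hv (by linarith : (0:ℝ) ≤ 1 - t) ht.le (by ring)
      convert this using 1
      module
    have h1 : ‖g‖ ^ 2 ≤ ‖g + t • (v - g)‖ ^ 2 := by
      have := hmin _ hmem
      have h0 : (0:ℝ) ≤ ‖g‖ := norm_nonneg _
      nlinarith
    have hexp : ‖g + t • (v - g)‖ ^ 2
        = ‖g‖ ^ 2 + 2 * (t * inner ℝ g (v - g)) + t ^ 2 * ‖v - g‖ ^ 2 := by
      rw [norm_add_sq_real, real_inner_smul_right, norm_smul]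
      simp [abs_of_pos ht]
      ring
    rw [hexp] at h1
    nlinarith
  have h2 : (0:ℝ) ≤ 2 * inner ℝ g (v - g) := by
    by_contra h
    push_neg at h
    set a : ℝ := 2 * inner ℝ g (v - g) with ha
    have h4 : (0:ℝ) < ‖v - g‖ ^ 2 + 1 := by positivity
    set t : ℝ := min 1 (-a / (‖v - g‖ ^ 2 + 1)) with htdef
    have hpos : 0 < t := lt_min one_pos (div_pos (by linarith) h4)
    have := key t hpos (min_le_left _ _)
    have h3 : t ≤ -a / (‖v - g‖ ^ 2 + 1) := min_le_right _ _
    have h5 : t * (‖v - g‖ ^ 2 + 1) ≤ -a := by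
      rw [← le_div_iff₀ h4]; exact h3
    nlinarith
  have h6 : inner ℝ g (v - g) = (inner ℝ g v : ℝ) - ‖g‖ ^ 2 := by
    rw [inner_sub_right, real_inner_self_eq_norm_sq]
  linarith [h6 ▸ h2]

/-- The gradient at a point of differentiability belongs to the Clarke subdifferential. -/
theorem aux_grad_mem_clarke (f : E → ℝ) (y : E) (hd : DifferentiableAt ℝ f y) :
    gradient f y ∈ clarkeSubdiff f y := by
  apply subset_closure
  apply subset_convexHull
  exact ⟨fun _ => y, fun _ => hd, tendsto_const_nhds, tendsto_const_nhds⟩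

theorem aux_grad_mem_goldstein (f : E → ℝ) (x : E) (ε : ℝ) (y : E) (hy : y ∈ closedBall x ε)
    (hd : DifferentiableAt ℝ f y) : gradient f y ∈ goldsteinSubdiff f x ε := by
  apply subset_convexHull
  exact mem_biUnion hy (aux_grad_mem_clarke f y hd)

theorem aux_goldsteinGrad_spec (f : E → ℝ) (x : E) (ε : ℝ) (hg : goldsteinGrad f x ε ≠ 0) :
    goldsteinGrad f x ε ∈ goldsteinSubdiff f x ε ∧
    ∀ w ∈ goldsteinSubdiff f x ε, ‖goldsteinGrad f x ε‖ ≤ ‖w‖ := by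
  rw [goldsteinGrad, minNorm] at hg ⊢
  split_ifs with h
  · exact h.choose_spec
  · rw [dif_neg h] at hg; exact absurd rfl hg

/-- Averaged descent step: if the directional pairing of the gradient with `c` is bounded by `B`
on a neighborhood of the segment from `x` to `x + c`, then `f (x + c) - f x ≤ B + 2 L r`. -/
theorem aux_descent_step [MeasurableSpace E] [BorelSpace E] (μ : Measure E)
    [μ.IsAddHaarMeasure] (f : E → ℝ) (Lc : ℝ≥0) (hf : LipschitzWith Lc f)
    (x c : E) (r : ℝ) (hr : 0 < r) (B : ℝ)
    (hB : ∀ y : E, y ∈ closedBall x (‖c‖ + r) → DifferentiableAt ℝ f y →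
      (inner ℝ (gradient f y) c : ℝ) ≤ B) :
    f (x + c) - f x ≤ B + 2 * Lc * r := by
  classical
  set K : Set E := closedBall (0 : E) r with hK
  have hK0 : μ K ≠ 0 := (measure_closedBall_pos μ 0 hr).ne'
  have hKtop : μ K ≠ ⊤ := measure_closedBall_lt_top.ne
  set ν : Measure E := (μ K)⁻¹ • μ.restrict K with hν
  haveI hprob : IsProbabilityMeasure ν := by
    constructor
    rw [hν]
    simp only [Measure.smul_apply, smul_eq_mul, Measure.restrict_apply_univ]
    exact ENNReal.inv_mul_cancel hK0 hKtop
  have hnull : ∀ A : Set E, μ A = 0 → ν A = 0 := by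
    intro A hA
    rw [hν]
    simp only [Measure.smul_apply, smul_eq_mul]
    have : μ.restrict K A ≤ μ A := Measure.restrict_le_self A
    simp [le_antisymm (this.trans hA.le) (by simp)]
  have haeK : ∀ᵐ w ∂ν, w ∈ K := by
    have h0 : ν Kᶜ = 0 := by
      rw [hν]
      simp only [Measure.smul_apply, smul_eq_mul]
      rw [Measure.restrict_apply measurableSet_closedBall.compl]
      simp [hK]
    exact (ae_iff.2 h0)
  have hline : ∀ (t₀ : ℝ) (w : E), HasDerivAt (fun t : ℝ => x + t • c + w) c t₀ := fun t₀ w => by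
    simpa using (((hasDerivAt_id t₀).smul_const c).const_add x).add_const w
  set F : ℝ → E → ℝ := fun t w => f (x + t • c + w) with hF
  set F' : ℝ → E → ℝ := fun t w => (inner ℝ (gradient f (x + t • c + w)) c : ℝ) with hF'
  have hcont : ∀ t : ℝ, Continuous (F t) := fun t =>
    hf.continuous.comp (continuous_const.add continuous_id)
  have hFmeas : ∀ t : ℝ, AEStronglyMeasurable (F t) ν := fun t =>
    (hcont t).aestronglyMeasurable
  have hFint : ∀ t : ℝ, Integrable (F t) ν := by
    intro t
    rw [hν]
    refine Integrable.smul_measure ?_ (ENNReal.inv_ne_top.2 hK0)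
    exact ((hcont t).continuousOn.integrableOn_compact (isCompact_closedBall _ _))
  have hF'meas : ∀ t : ℝ, AEStronglyMeasurable (F' t) ν := by
    intro t
    refine Measurable.aestronglyMeasurable ?_
    have h1 : Measurable (fun z : E => gradient f z) :=
      ((InnerProductSpace.toDual ℝ E).symm.continuous.measurable).comp (measurable_fderiv ℝ f)
    have h2 : Continuous (fun v : E => (inner ℝ v c : ℝ)) :=
      (innerSL ℝ (E := E)).continuous₂.comp (continuous_id.prodMk continuous_const)
    exact (h2.measurable.comp h1).comp (measurable_const.add measurable_id)
  have hdiffae : ∀ t₀ : ℝ, ∀ᵐ w ∂ν, DifferentiableAt ℝ f (x + t₀ • c + w) := by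
    intro t₀
    have hN : μ {z : E | ¬ DifferentiableAt ℝ f z} = 0 := by
      have := hf.ae_differentiableAt_of_real (μ := μ)
      rwa [ae_iff] at this
    have : ν {w : E | ¬ DifferentiableAt ℝ f (x + t₀ • c + w)} = 0 := by
      apply hnull
      have : {w : E | ¬ DifferentiableAt ℝ f (x + t₀ • c + w)}
          = (fun w : E => (x + t₀ • c) + w) ⁻¹' {z : E | ¬ DifferentiableAt ℝ f z} := rfl
      rw [this, measure_preimage_add]
      exact hN
    exact ae_iff.2 this
  set h : ℝ → ℝ := fun t => ∫ w, F t w ∂ν with hh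
  have hder : ∀ t₀ : ℝ, HasDerivAt h (∫ w, F' t₀ w ∂ν) t₀ ∧ Integrable (F' t₀) ν := by
    intro t₀
    have key := hasDerivAt_integral_of_dominated_loc_of_lip
      (F := F) (F' := F' t₀) (x₀ := t₀) (μ := ν) (bound := fun _ => (Lc : ℝ) * ‖c‖)
      (Metric.ball_mem_nhds t₀ one_pos) (Eventually.of_forall fun t => hFmeas t) (hFint t₀) (hF'meas t₀)
      ?_ (integrable_const _) ?_
    · exact ⟨key.2, key.1⟩
    · refine Eventually.of_forall fun w => ?_
      have hl : LipschitzWith (Lc * ‖c‖₊) (fun t : ℝ => F t w) := by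
        apply LipschitzWith.comp hf
        refine LipschitzWith.of_dist_le_mul fun a b => ?_
        simp only [dist_eq_norm]
        have : x + a • c + w - (x + b • c + w) = (a - b) • c := by module
        rw [this, norm_smul]
        simp [mul_comm]
      refine (hl.weaken ?_).lipschitzOnWith
      rw [← NNReal.coe_le_coe]
      simp [Real.coe_nnabs, abs_of_nonneg (by positivity : (0:ℝ) ≤ (Lc:ℝ) * ‖c‖)]
    · filter_upwards [hdiffae t₀] with w hw
      have := hw.hasFDerivAt.comp_hasDerivAt t₀ (hline t₀ w)
      have h2 : fderiv ℝ f (x + t₀ • c + w) c = (inner ℝ (gradient f (x + t₀ • c + w)) c : ℝ) := by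
        rw [gradient]; simp
      have h3 : F' t₀ w = fderiv ℝ f (x + t₀ • c + w) c := h2.symm
      rw [h3]; exact this
  have hbound : ∀ t ∈ Ioo (0:ℝ) 1, (∫ w, F' t w ∂ν) ≤ B := by
    intro t ht
    have hae : ∀ᵐ w ∂ν, F' t w ≤ B := by
      filter_upwards [haeK, hdiffae t] with w hwK hwd
      refine hB _ ?_ hwd
      rw [mem_closedBall]
      have heq : x + t • c + w - x = t • c + w := by abel
      rw [dist_eq_norm, heq]
      calc ‖t • c + w‖ ≤ ‖t • c‖ + ‖w‖ := norm_add_le _ _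
        _ ≤ 1 * ‖c‖ + r := by
            rw [norm_smul]
            gcongr
            · simp [abs_of_pos ht.1, ht.2.le]
            · simpa [hK] using hwK
        _ = ‖c‖ + r := by ring
    calc (∫ w, F' t w ∂ν) ≤ ∫ _, B ∂ν := integral_mono_ae (hder t).2 (integrable_const B) hae
      _ = B := by simp
  obtain ⟨ξ, hξ, hslope⟩ := exists_hasDerivAt_eq_slope h (fun t => ∫ w, F' t w ∂ν) one_pos
    (fun t _ => ((hder t).1.continuousAt.continuousWithinAt))
    (fun t _ => (hder t).1)
  have hmvt : h 1 - h 0 ≤ B := by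
    have heq : h 1 - h 0 = ∫ w, F' ξ w ∂ν := by
      rw [hslope]; norm_num
    rw [heq]
    exact hbound ξ hξ
  have hcmp : ∀ t : ℝ, |h t - f (x + t • c)| ≤ (Lc : ℝ) * r := by
    intro t
    have heq : h t - f (x + t • c) = ∫ w, (F t w - f (x + t • c)) ∂ν := by
      rw [integral_sub (hFint t) (integrable_const _)]
      simp
      rfl
    rw [heq, ← Real.norm_eq_abs]
    refine (norm_integral_le_of_norm_le (integrable_const ((Lc : ℝ) * r)) ?_).trans ?_
    · filter_upwards [haeK] with w hwK
      have hle : ‖F t w - f (x + t • c)‖ ≤ (Lc : ℝ) * ‖(x + t • c + w) - (x + t • c)‖ := by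
        simpa [dist_eq_norm] using hf.dist_le_mul (x + t • c + w) (x + t • c)
      refine hle.trans ?_
      have heq2 : x + t • c + w - (x + t • c) = w := by abel
      rw [heq2]
      have hw : ‖w‖ ≤ r := by simpa [hK] using hwK
      gcongr
    · simp
  have h0 := hcmp 0
  have h1 := hcmp 1
  have e0 : x + (0:ℝ) • c = x := by simp
  have e1 : x + (1:ℝ) • c = x + c := by simp
  rw [e0] at h0
  rw [e1] at h1
  have a0 := abs_le.1 h0
  have a1 := abs_le.1 h1
  linarith [hmvt]

end Aux

theorem stmt6 (f : E → ℝ) (L : ℝ) (hL : 0 ≤ L) (hf : LipschitzWith L.toNNReal f)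
    (x : E) (ε : ℝ) (hε : 0 < ε) (hg : goldsteinGrad f x ε ≠ 0) :
    f (x - (ε / ‖goldsteinGrad f x ε‖) • goldsteinGrad f x ε) ≤
      f x - ε * ‖goldsteinGrad f x ε‖ := by
  classical
  set g : E := goldsteinGrad f x ε with hgdef
  obtain ⟨hmem, hmin⟩ := aux_goldsteinGrad_spec f x ε hg
  have hgnorm : 0 < ‖g‖ := norm_pos_iff.2 hg
  have hconv : Convex ℝ (goldsteinSubdiff f x ε) := convex_convexHull ℝ _
  have hinner : ∀ v ∈ goldsteinSubdiff f x ε, ‖g‖ ^ 2 ≤ inner ℝ g v :=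
    fun v hv => aux_minNorm_inner _ hconv g hmem hmin v hv
  letI : MeasurableSpace E := borel E
  haveI : BorelSpace E := ⟨rfl⟩
  set μ : MeasureTheory.Measure E := (Module.finBasis ℝ E).addHaar with hμ
  set d : E := -((ε / ‖g‖) • g) with hd
  have hLcoe : ((L.toNNReal : NNReal) : ℝ) = L := Real.coe_toNNReal L hL
  have hdnorm : ‖d‖ = ε := by
    rw [hd, norm_neg, norm_smul, Real.norm_eq_abs, abs_of_pos (div_pos hε hgnorm)]
    field_simp
  have key : ∀ θ : ℝ, 0 < θ → θ < 1 →
      f (x + d) - f x ≤ -(ε * ‖g‖) + θ * (ε * ‖g‖ + 3 * L * ε) := by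
    intro θ h0 h1
    set c : E := (1 - θ) • d with hc
    have hcnorm : ‖c‖ = (1 - θ) * ε := by
      rw [hc, norm_smul, hdnorm, Real.norm_eq_abs, abs_of_pos (by linarith)]
    have hrad : ‖c‖ + θ * ε = ε := by rw [hcnorm]; ring
    have step := aux_descent_step μ f L.toNNReal hf x c (θ * ε) (by positivity)
      (-((1 - θ) * (ε * ‖g‖))) ?_
    · -- step : f (x + c) - f x ≤ -((1-θ) * (ε * ‖g‖)) + 2 * L.toNNReal * (θ * ε)
      rw [hLcoe] at step
      have hfc : f (x + d) ≤ f (x + c) + L * (θ * ε) := by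
        have hdist := hf.dist_le_mul (x + d) (x + c)
        rw [hLcoe] at hdist
        have heq : dist (x + d) (x + c) = θ * ε := by
          rw [dist_eq_norm]
          have : x + d - (x + c) = θ • d := by rw [hc]; module
          rw [this, norm_smul, hdnorm, Real.norm_eq_abs, abs_of_pos h0]
        rw [heq] at hdist
        have := abs_le.1 ((Real.dist_eq _ _) ▸ hdist)
        linarith [this.1, this.2]
      nlinarith [step, hfc]
    · intro y hy hdy
      have hy' : y ∈ closedBall x ε := by rwa [hrad] at hy
      have hv := hinner (gradient f y) (aux_grad_mem_goldstein f x ε y hy' hdy)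
      have hcomm : (inner ℝ g (gradient f y) : ℝ) = inner ℝ (gradient f y) g := real_inner_comm _ _
      rw [hcomm] at hv
      have hci : (inner ℝ (gradient f y) c : ℝ)
          = -((1 - θ) * (ε / ‖g‖)) * inner ℝ (gradient f y) g := by
        rw [hc, hd]
        simp only [inner_neg_right, real_inner_smul_right]
        ring
      rw [hci]
      have hcoef : 0 ≤ (1 - θ) * (ε / ‖g‖) := mul_nonneg (by linarith) (by positivity)
      have : -((1 - θ) * (ε / ‖g‖)) * inner ℝ (gradient f y) g
          ≤ -((1 - θ) * (ε / ‖g‖)) * ‖g‖ ^ 2 := by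
        apply mul_le_mul_of_nonpos_left hv (by linarith)
      refine this.trans (le_of_eq ?_)
      field_simp
  have final : f (x + d) - f x ≤ -(ε * ‖g‖) := by
    refine le_of_forall_pos_le_add fun δ hδ => ?_
    set C : ℝ := ε * ‖g‖ + 3 * L * ε with hC
    have hC0 : 0 ≤ C := by positivity
    set θ : ℝ := min (1/2) (δ / (C + 1)) with hθ
    have h0 : 0 < θ := lt_min (by norm_num) (div_pos hδ (by linarith))
    have h1 : θ < 1 := lt_of_le_of_lt (min_le_left _ _) (by norm_num)
    have hk := key θ h0 h1
    have h2 : θ ≤ δ / (C + 1) := min_le_right _ _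
    have h3 : θ * (C + 1) ≤ δ := by
      rw [← le_div_iff₀ (by linarith : (0:ℝ) < C + 1)]; exact h2
    nlinarith
  have hxe : x - (ε / ‖g‖) • g = x + d := by rw [hd]; abel
  rw [hxe]
  linarith
end

section
/- Let α > 0 and define f₁ : E → ℝ by f₁(x) = (1/2)·α·‖x‖². Then for every x ∈ E the Goldstein modulus satisfies Γf₁(x) = (α/(1+α))·‖x‖; in particular Γf₁ grows linearly at the unique minimizer 0. -/
open Filter Topology Metric Set
open scoped Classical

variable {E : Type*} [NormedAddCommGroup E] [InnerProductSpace ℝ E] [FiniteDimensional ℝ E]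

lemma hasGradientAt_quad (α : ℝ) (x : E) :
    HasGradientAt (fun y : E => 1 / 2 * α * ‖y‖ ^ 2) (α • x) x := by
  rw [hasGradientAt_iff_hasFDerivAt]
  have h1 : HasFDerivAt (fun y : E => (inner ℝ y y : ℝ))
      ((fderivInnerCLM ℝ (x, x)).comp
        ((ContinuousLinearMap.id ℝ E).prod (ContinuousLinearMap.id ℝ E))) x :=
    (hasFDerivAt_id x).inner ℝ (hasFDerivAt_id x)
  have h2 := h1.const_mul (1 / 2 * α)
  have hf : (fun y : E => 1 / 2 * α * ‖y‖ ^ 2) = fun y : E => 1 / 2 * α * (inner ℝ y y : ℝ) := by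
    ext y; rw [real_inner_self_eq_norm_sq]
  rw [hf]
  convert h2 using 1
  · rfl
  ext w
  simp [InnerProductSpace.toDual_apply_apply, fderivInnerCLM_apply, real_inner_smul_left,
    real_inner_comm x w]
  ring

lemma gradient_quad (α : ℝ) (x : E) :
    gradient (fun y : E => 1 / 2 * α * ‖y‖ ^ 2) x = α • x :=
  (hasGradientAt_quad α x).gradient

lemma clarkeSubdiff_quad (α : ℝ) (x : E) :
    clarkeSubdiff (fun y : E => 1 / 2 * α * ‖y‖ ^ 2) x = {α • x} := by
  have hset : {v : E | ∃ u : ℕ → E,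
      (∀ n, DifferentiableAt ℝ (fun y : E => 1 / 2 * α * ‖y‖ ^ 2) (u n)) ∧
      Tendsto u atTop (𝓝 x) ∧
      Tendsto (fun n => gradient (fun y : E => 1 / 2 * α * ‖y‖ ^ 2) (u n)) atTop (𝓝 v)}
      = {α • x} := by
    ext v
    constructor
    · rintro ⟨u, -, hux, hgv⟩
      have h1 : Tendsto (fun n => gradient (fun y : E => 1 / 2 * α * ‖y‖ ^ 2) (u n)) atTop
          (𝓝 (α • x)) := by
        have : Tendsto (fun n => α • u n) atTop (𝓝 (α • x)) := hux.const_smul α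
        convert this using 2 with n
        exact gradient_quad α (u n)
      exact (tendsto_nhds_unique hgv h1).symm ▸ rfl
    · rintro rfl
      refine ⟨fun _ => x, fun n => (hasGradientAt_quad α x).differentiableAt,
        tendsto_const_nhds, ?_⟩
      simp only [gradient_quad]
      exact tendsto_const_nhds
  rw [clarkeSubdiff, hset, convexHull_singleton, closure_singleton]

lemma goldsteinSubdiff_quad (α : ℝ) (hα : 0 < α) (x : E) {ε : ℝ} (hε : 0 ≤ ε) :
    goldsteinSubdiff (fun y : E => 1 / 2 * α * ‖y‖ ^ 2) x ε = closedBall (α • x) (α * ε) := by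
  have hU : (⋃ y ∈ closedBall x ε, clarkeSubdiff (fun y : E => 1 / 2 * α * ‖y‖ ^ 2) y)
      = closedBall (α • x) (α * ε) := by
    ext v
    simp only [mem_iUnion, clarkeSubdiff_quad, mem_singleton_iff, mem_closedBall,
      exists_prop, dist_eq_norm]
    constructor
    · rintro ⟨y, hy, rfl⟩
      rw [← smul_sub, norm_smul, Real.norm_eq_abs, abs_of_pos hα]
      exact mul_le_mul_of_nonneg_left hy hα.le
    · intro hv
      refine ⟨α⁻¹ • v, ?_, by rw [smul_inv_smul₀ hα.ne']⟩
      have : α⁻¹ • v - x = α⁻¹ • (v - α • x) := by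
        rw [smul_sub, inv_smul_smul₀ hα.ne']
      rw [this, norm_smul, Real.norm_eq_abs, abs_of_pos (inv_pos.mpr hα)]
      calc α⁻¹ * ‖v - α • x‖ ≤ α⁻¹ * (α * ε) :=
            mul_le_mul_of_nonneg_left hv (inv_pos.mpr hα).le
        _ = ε := by field_simp
  rw [goldsteinSubdiff, hU, (convex_closedBall _ _).convexHull_eq]

lemma norm_minNorm_closedBall (c : E) {r : ℝ} (hr : 0 ≤ r) :
    ‖minNorm (closedBall c r)‖ = max (‖c‖ - r) 0 := by
  obtain ⟨v, hv, hvn⟩ : ∃ v, v ∈ closedBall c r ∧ ‖v‖ = max (‖c‖ - r) 0 := by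
    rcases le_or_gt ‖c‖ r with h | h
    · exact ⟨0, by simpa [dist_eq_norm] using h, by simp [max_eq_right, sub_nonpos.mpr h]⟩
    · have hc : c ≠ 0 := by intro h0; rw [h0, norm_zero] at h; linarith
      refine ⟨(1 - r / ‖c‖) • c, ?_, ?_⟩
      · rw [mem_closedBall, dist_eq_norm]
        have : (1 - r / ‖c‖) • c - c = (-(r / ‖c‖)) • c := by
          rw [sub_smul, one_smul, neg_smul]; abel
        rw [this, norm_smul, Real.norm_eq_abs, abs_neg,
          abs_of_nonneg (div_nonneg hr (norm_nonneg c)), div_mul_cancel₀ _ (norm_ne_zero_iff.mpr hc)]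
      · rw [norm_smul, Real.norm_eq_abs]
        have h1 : 0 ≤ 1 - r / ‖c‖ := by
          rw [sub_nonneg, div_le_one (norm_pos_iff.mpr hc)]; exact h.le
        rw [abs_of_nonneg h1, sub_mul, one_mul,
          div_mul_cancel₀ _ (norm_ne_zero_iff.mpr hc), max_eq_left (by linarith)]
  have hlow : ∀ w ∈ closedBall c r, max (‖c‖ - r) 0 ≤ ‖w‖ := by
    intro w hw
    rw [mem_closedBall, dist_eq_norm] at hw
    refine max_le ?_ (norm_nonneg w)
    have := norm_sub_norm_le c w
    have h2 : ‖c - w‖ = ‖w - c‖ := norm_sub_rev _ _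
    linarith
  have hex : ∃ u, u ∈ closedBall c r ∧ ∀ w ∈ closedBall c r, ‖u‖ ≤ ‖w‖ :=
    ⟨v, hv, fun w hw => hvn ▸ hlow w hw⟩
  rw [minNorm, dif_pos hex]
  exact le_antisymm (le_trans (hex.choose_spec.2 v hv) hvn.le) (hlow _ hex.choose_spec.1)

lemma goldsteinModulus_quad (α : ℝ) (hα : 0 < α) (x : E) :
    goldsteinModulus (fun y : E => 1 / 2 * α * ‖y‖ ^ 2) x = α / (1 + α) * ‖x‖ := by
  have h1α : (0:ℝ) < 1 + α := by linarith
  have ht : 0 ≤ α / (1 + α) * ‖x‖ :=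
    mul_nonneg (div_nonneg hα.le h1α.le) (norm_nonneg x)
  have hset : {ε : ℝ | 0 ≤ ε ∧ ‖goldsteinGrad (fun y : E => 1 / 2 * α * ‖y‖ ^ 2) x ε‖ ≤ ε}
      = Ici (α / (1 + α) * ‖x‖) := by
    ext ε
    simp only [mem_setOf_eq, mem_Ici]
    constructor
    · rintro ⟨hε, hg⟩
      rw [goldsteinGrad, goldsteinSubdiff_quad α hα x hε,
        norm_minNorm_closedBall _ (mul_nonneg hα.le hε), norm_smul, Real.norm_eq_abs,
        abs_of_pos hα] at hg
      have h2 : α * ‖x‖ - α * ε ≤ ε := le_trans (le_max_left _ _) hg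
      rw [div_mul_eq_mul_div, div_le_iff₀ h1α]
      nlinarith
    · intro hε
      have hε0 : 0 ≤ ε := le_trans ht hε
      refine ⟨hε0, ?_⟩
      rw [goldsteinGrad, goldsteinSubdiff_quad α hα x hε0,
        norm_minNorm_closedBall _ (mul_nonneg hα.le hε0), norm_smul, Real.norm_eq_abs,
        abs_of_pos hα]
      rw [div_mul_eq_mul_div, div_le_iff₀ h1α] at hε
      refine max_le (by nlinarith) hε0
  rw [goldsteinModulus, hset, csInf_Ici]

theorem stmt9 (α : ℝ) (hα : 0 < α) :
    (∀ x : E, goldsteinModulus (fun y : E => 1 / 2 * α * ‖y‖ ^ 2) x = α / (1 + α) * ‖x‖) ∧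
    ∃ c > 0, ∃ ρ > 0, ∀ x : E, ‖x‖ ≤ ρ →
      c * ‖x‖ ≤ goldsteinModulus (fun y : E => 1 / 2 * α * ‖y‖ ^ 2) x := by
  refine ⟨fun x => goldsteinModulus_quad α hα x, α / (1 + α), ?_, 1, one_pos, fun x _ => ?_⟩
  · exact div_pos hα (by linarith)
  · rw [goldsteinModulus_quad α hα x]
end

section
/- Let α > 0 and define f₂ : ℝ → ℝ by f₂(x) = α·|x|. Then for every x ∈ ℝ the Goldstein modulus satisfies Γf₂(x) = min{|x|, α}; in particular Γf₂ grows linearly at the unique minimizer 0. -/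
open Filter Topology Metric Set
open scoped Classical

variable {E : Type*} [NormedAddCommGroup E] [InnerProductSpace ℝ E] [FiniteDimensional ℝ E]

section Aux

variable {α : ℝ}

private lemma abs_fdiff (hx : x ≠ 0) :
    DifferentiableAt ℝ (fun y : ℝ => α * |y|) x :=
  (differentiableAt_abs hx).const_mul α

private lemma abs_fnotdiff (hα : 0 < α) :
    ¬ DifferentiableAt ℝ (fun y : ℝ => α * |y|) 0 := by
  intro h
  have h2 : DifferentiableAt ℝ (fun y : ℝ => α⁻¹ * (α * |y|)) 0 := h.const_mul _
  have he : (fun y : ℝ => α⁻¹ * (α * |y|)) = fun y : ℝ => |y| := by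
    funext y; field_simp
  rw [he] at h2
  exact not_differentiableAt_abs_zero h2

private lemma grad_pos {x : ℝ} (hx : 0 < x) :
    gradient (fun y : ℝ => α * |y|) x = α := by
  rw [gradient_eq_deriv']
  have h := (hasDerivAt_abs_pos hx).const_mul α
  simpa using h.deriv

private lemma grad_neg {x : ℝ} (hx : x < 0) :
    gradient (fun y : ℝ => α * |y|) x = -α := by
  rw [gradient_eq_deriv']
  have h := (hasDerivAt_abs_neg hx).const_mul α
  simpa using h.deriv

private lemma clarke_pos (hα : 0 < α) {x : ℝ} (hx : 0 < x) :
    clarkeSubdiff (fun y : ℝ => α * |y|) x = {α} := by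
  have hset : {v : ℝ | ∃ u : ℕ → ℝ,
      (∀ n, DifferentiableAt ℝ (fun y : ℝ => α * |y|) (u n)) ∧
      Tendsto u atTop (𝓝 x) ∧
      Tendsto (fun n => gradient (fun y : ℝ => α * |y|) (u n)) atTop (𝓝 v)} = {α} := by
    ext v
    constructor
    · rintro ⟨u, hd, hux, hgrad⟩
      have hev : ∀ᶠ n in atTop, 0 < u n := hux.eventually (eventually_gt_nhds hx)
      have hconst : Tendsto (fun n => gradient (fun y : ℝ => α * |y|) (u n)) atTop (𝓝 α) :=
        Tendsto.congr' (hev.mono fun n hn => (grad_pos hn).symm) tendsto_const_nhds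
      exact tendsto_nhds_unique hgrad hconst
    · rintro rfl
      refine ⟨fun _ => x, fun _ => abs_fdiff hx.ne', tendsto_const_nhds, ?_⟩
      simpa [grad_pos hx] using (tendsto_const_nhds : Tendsto (fun _ : ℕ => (α : ℝ)) atTop _)
  rw [clarkeSubdiff, hset, convexHull_singleton, closure_singleton]

private lemma clarke_neg (hα : 0 < α) {x : ℝ} (hx : x < 0) :
    clarkeSubdiff (fun y : ℝ => α * |y|) x = {-α} := by
  have hset : {v : ℝ | ∃ u : ℕ → ℝ,
      (∀ n, DifferentiableAt ℝ (fun y : ℝ => α * |y|) (u n)) ∧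
      Tendsto u atTop (𝓝 x) ∧
      Tendsto (fun n => gradient (fun y : ℝ => α * |y|) (u n)) atTop (𝓝 v)} = {-α} := by
    ext v
    constructor
    · rintro ⟨u, hd, hux, hgrad⟩
      have hev : ∀ᶠ n in atTop, u n < 0 := hux.eventually (eventually_lt_nhds hx)
      have hconst : Tendsto (fun n => gradient (fun y : ℝ => α * |y|) (u n)) atTop (𝓝 (-α)) :=
        Tendsto.congr' (hev.mono fun n hn => (grad_neg hn).symm) tendsto_const_nhds
      exact tendsto_nhds_unique hgrad hconst
    · rintro rfl
      refine ⟨fun _ => x, fun _ => abs_fdiff hx.ne, tendsto_const_nhds, ?_⟩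
      simpa [grad_neg hx] using (tendsto_const_nhds : Tendsto (fun _ : ℕ => (-α : ℝ)) atTop _)
  rw [clarkeSubdiff, hset, convexHull_singleton, closure_singleton]

private lemma clarke_zero (hα : 0 < α) :
    clarkeSubdiff (fun y : ℝ => α * |y|) 0 = Icc (-α) α := by
  have htend : Tendsto (fun n : ℕ => 1 / (n + 1 : ℝ)) atTop (𝓝 0) :=
    tendsto_one_div_add_atTop_nhds_zero_nat
  have hpos : ∀ n : ℕ, (0 : ℝ) < 1 / (n + 1 : ℝ) := fun n => by positivity
  have hset : {v : ℝ | ∃ u : ℕ → ℝ,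
      (∀ n, DifferentiableAt ℝ (fun y : ℝ => α * |y|) (u n)) ∧
      Tendsto u atTop (𝓝 0) ∧
      Tendsto (fun n => gradient (fun y : ℝ => α * |y|) (u n)) atTop (𝓝 v)}
      = {-α, α} := by
    ext v
    constructor
    · rintro ⟨u, hd, hux, hgrad⟩
      have hmem : ∀ n, gradient (fun y : ℝ => α * |y|) (u n) ∈ ({-α, α} : Set ℝ) := by
        intro n
        rcases lt_trichotomy (u n) 0 with h | h | h
        · exact Or.inl (grad_neg h)
        · exact absurd (hd n) (h ▸ abs_fnotdiff hα)
        · exact Or.inr (grad_pos h)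
      have hclosed : IsClosed ({-α, α} : Set ℝ) :=
        (Set.toFinite ({-α, α} : Set ℝ)).isClosed
      exact hclosed.mem_of_tendsto hgrad (Eventually.of_forall hmem)
    · rintro (h | h)
      · refine ⟨fun n => -(1 / (n + 1 : ℝ)), fun n => abs_fdiff (by nlinarith [hpos n]),
          by simpa using htend.neg, ?_⟩
        rw [h]
        exact Tendsto.congr (fun n => (grad_neg (by nlinarith [hpos n])).symm)
          tendsto_const_nhds
      · refine ⟨fun n => 1 / (n + 1 : ℝ), fun n => abs_fdiff (hpos n).ne',
          htend, ?_⟩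
        rw [h]
        exact Tendsto.congr (fun n => (grad_pos (hpos n)).symm) tendsto_const_nhds
  rw [clarkeSubdiff, hset, convexHull_pair, segment_eq_Icc (by linarith : (-α : ℝ) ≤ α),
    closure_Icc]

private lemma clarke_subset (hα : 0 < α) (y : ℝ) :
    clarkeSubdiff (fun y : ℝ => α * |y|) y ⊆ Icc (-α) α := by
  rcases lt_trichotomy y 0 with h | h | h
  · rw [clarke_neg hα h]; rintro v rfl; exact ⟨le_rfl, by linarith⟩
  · rw [h, clarke_zero hα]
  · rw [clarke_pos hα h]; rintro v rfl; exact ⟨by linarith, le_rfl⟩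

private lemma gs_near (hα : 0 < α) {x ε : ℝ} (hx : |x| ≤ ε) :
    goldsteinSubdiff (fun y : ℝ => α * |y|) x ε = Icc (-α) α := by
  apply Subset.antisymm
  · refine convexHull_min ?_ (convex_Icc _ _)
    rintro v hv
    simp only [mem_iUnion] at hv
    obtain ⟨y, _, hy⟩ := hv
    exact clarke_subset hα y hy
  · have h0 : (0 : ℝ) ∈ Metric.closedBall x ε := by
      simp only [Metric.mem_closedBall, Real.dist_eq]
      simpa [abs_sub_comm] using hx
    calc Icc (-α) α = clarkeSubdiff (fun y : ℝ => α * |y|) 0 := (clarke_zero hα).symm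
      _ ⊆ ⋃ y ∈ Metric.closedBall x ε, clarkeSubdiff (fun y : ℝ => α * |y|) y :=
          subset_biUnion_of_mem h0
      _ ⊆ goldsteinSubdiff (fun y : ℝ => α * |y|) x ε := subset_convexHull ℝ _

private lemma gs_far_pos (hα : 0 < α) {x ε : ℝ} (hε : 0 ≤ ε) (hx : ε < x) :
    goldsteinSubdiff (fun y : ℝ => α * |y|) x ε = {α} := by
  have hu : (⋃ y ∈ Metric.closedBall x ε, clarkeSubdiff (fun y : ℝ => α * |y|) y)
      = {α} := by
    apply Subset.antisymm
    · rintro v hv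
      simp only [mem_iUnion] at hv
      obtain ⟨y, hy, hv⟩ := hv
      rw [Metric.mem_closedBall, Real.dist_eq] at hy
      have hy0 : 0 < y := by
        have := abs_le.mp hy
        linarith [this.1]
      rwa [clarke_pos hα hy0] at hv
    · intro v hv
      exact mem_biUnion (Metric.mem_closedBall_self hε)
        ((clarke_pos hα (lt_of_le_of_lt hε hx)) ▸ hv)
  rw [goldsteinSubdiff, hu, convexHull_singleton]

private lemma gs_far_neg (hα : 0 < α) {x ε : ℝ} (hε : 0 ≤ ε) (hx : x < -ε) :
    goldsteinSubdiff (fun y : ℝ => α * |y|) x ε = {-α} := by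
  have hu : (⋃ y ∈ Metric.closedBall x ε, clarkeSubdiff (fun y : ℝ => α * |y|) y)
      = {-α} := by
    apply Subset.antisymm
    · rintro v hv
      simp only [mem_iUnion] at hv
      obtain ⟨y, hy, hv⟩ := hv
      rw [Metric.mem_closedBall, Real.dist_eq] at hy
      have hy0 : y < 0 := by
        have := abs_le.mp hy
        linarith [this.2]
      rwa [clarke_neg hα hy0] at hv
    · intro v hv
      exact mem_biUnion (Metric.mem_closedBall_self hε)
        ((clarke_neg hα (by linarith : x < 0)) ▸ hv)
  rw [goldsteinSubdiff, hu, convexHull_singleton]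

private lemma minNorm_singleton (v : ℝ) : minNorm ({v} : Set ℝ) = v := by
  have hp : ∃ u, u ∈ ({v} : Set ℝ) ∧ ∀ w ∈ ({v} : Set ℝ), ‖u‖ ≤ ‖w‖ :=
    ⟨v, mem_singleton v, fun w hw => by rw [mem_singleton_iff] at hw; rw [hw]⟩
  rw [minNorm, dif_pos hp]
  exact hp.choose_spec.1

private lemma minNorm_Icc (hα : 0 < α) : minNorm (Icc (-α) α : Set ℝ) = 0 := by
  have h0 : (0 : ℝ) ∈ Icc (-α) α := ⟨by linarith, hα.le⟩
  have hp : ∃ u, u ∈ (Icc (-α) α : Set ℝ) ∧ ∀ w ∈ (Icc (-α) α : Set ℝ), ‖u‖ ≤ ‖w‖ :=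
    ⟨0, h0, fun w _ => by simp⟩
  rw [minNorm, dif_pos hp]
  have hle : ‖hp.choose‖ ≤ 0 := by simpa using hp.choose_spec.2 0 h0
  exact norm_le_zero_iff.mp hle

private lemma modulus_eq (hα : 0 < α) (x : ℝ) :
    goldsteinModulus (fun y : ℝ => α * |y|) x = min |x| α := by
  have hS : {ε : ℝ | 0 ≤ ε ∧ ‖goldsteinGrad (fun y : ℝ => α * |y|) x ε‖ ≤ ε}
      = Ici (min |x| α) := by
    ext ε
    simp only [mem_setOf_eq, mem_Ici]
    constructor
    · rintro ⟨hε0, hε⟩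
      by_cases h : |x| ≤ ε
      · exact le_trans (min_le_left _ _) h
      · push_neg at h
        have hαε : α ≤ ε := by
          rcases lt_trichotomy x 0 with hx | hx | hx
          · have hxε : x < -ε := by
              rw [abs_of_neg hx] at h; linarith
            rw [goldsteinGrad, gs_far_neg hα hε0 hxε, minNorm_singleton,
              Real.norm_eq_abs, abs_neg, abs_of_pos hα] at hε
            exact hε
          · rw [hx] at h; simp at h; linarith
          · have hxε : ε < x := by rwa [abs_of_pos hx] at h
            rw [goldsteinGrad, gs_far_pos hα hε0 hxε, minNorm_singleton,
              Real.norm_eq_abs, abs_of_pos hα] at hε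
            exact hε
        exact le_trans (min_le_right _ _) hαε
    · intro h
      have hε0 : 0 ≤ ε := le_trans (le_min (abs_nonneg x) hα.le) h
      refine ⟨hε0, ?_⟩
      by_cases hx : |x| ≤ ε
      · rw [goldsteinGrad, gs_near hα hx, minNorm_Icc hα]
        simpa using hε0
      · push_neg at hx
        have hαε : α ≤ ε := by
          rcases le_total α |x| with h1 | h1
          · calc α = min |x| α := (min_eq_right h1).symm
              _ ≤ ε := h
          · rw [min_eq_left h1] at h; linarith
        rcases lt_trichotomy x 0 with hx0 | hx0 | hx0
        · have hxε : x < -ε := by rw [abs_of_neg hx0] at hx; linarith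
          rw [goldsteinGrad, gs_far_neg hα hε0 hxε, minNorm_singleton,
            Real.norm_eq_abs, abs_neg, abs_of_pos hα]
          exact hαε
        · rw [hx0] at hx; simp at hx; linarith
        · have hxε : ε < x := by rwa [abs_of_pos hx0] at hx
          rw [goldsteinGrad, gs_far_pos hα hε0 hxε, minNorm_singleton,
            Real.norm_eq_abs, abs_of_pos hα]
          exact hαε
  rw [goldsteinModulus, hS, csInf_Ici]

end Aux

theorem stmt10 (α : ℝ) (hα : 0 < α) :
    (∀ x : ℝ, goldsteinModulus (fun y : ℝ => α * |y|) x = min |x| α) ∧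
    ∃ c > 0, ∃ ρ > 0, ∀ x : ℝ, |x| ≤ ρ →
      c * |x| ≤ goldsteinModulus (fun y : ℝ => α * |y|) x := by
  refine ⟨fun x => modulus_eq hα x, 1, one_pos, α, hα, fun x hx => ?_⟩
  rw [modulus_eq hα x, one_mul, min_eq_left hx]
end

section
/- Let α > 0 and define f₃ : E → ℝ by f₃(x) = (1/4)·α·‖x‖⁴. Then for every x ∈ E the Goldstein modulus satisfies Γf₃(x) ≤ α·‖x‖³; in particular the growth of Γf₃ at the unique minimizer 0 is slower than linear. -/
open Filter Topology Metric Set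
open scoped Classical

variable {E : Type*} [NormedAddCommGroup E] [InnerProductSpace ℝ E] [FiniteDimensional ℝ E]

theorem hasGradAux {E : Type*} [NormedAddCommGroup E] [InnerProductSpace ℝ E]
    [CompleteSpace E] (α : ℝ) (x : E) :
    HasGradientAt (fun y : E => 1 / 4 * α * ‖y‖ ^ 4) ((α * ‖x‖ ^ 2) • x) x := by
  rw [hasGradientAt_iff_hasFDerivAt]
  have h1 : HasFDerivAt (fun y : E => @inner ℝ _ _ y y)
      (fderivInnerCLM ℝ (x, x) |>.comp ((ContinuousLinearMap.id ℝ E).prod (ContinuousLinearMap.id ℝ E))) x :=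
    (hasFDerivAt_id x).inner ℝ (hasFDerivAt_id x)
  have h2 := (h1.mul h1).const_mul (1 / 4 * α)
  have heq : (fun y : E => 1 / 4 * α * (@inner ℝ _ _ y y * @inner ℝ _ _ y y)) = fun y : E => 1 / 4 * α * ‖y‖ ^ 4 := by
    funext y
    rw [real_inner_self_eq_norm_sq]
    ring
  simp only [Pi.mul_apply] at h2
  rw [heq] at h2
  refine h2.congr_fderiv ?_
  ext v
  simp [real_inner_self_eq_norm_sq, fderivInnerCLM, real_inner_smul_left, real_inner_comm x v]
  ring

theorem stmt11 (α : ℝ) (hα : 0 < α) (x : E) :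
    goldsteinModulus (fun y : E => 1 / 4 * α * ‖y‖ ^ 4) x ≤ α * ‖x‖ ^ 3 := by
  set f : E → ℝ := fun y : E => 1 / 4 * α * ‖y‖ ^ 4 with hf
  set ε₀ : ℝ := α * ‖x‖ ^ 3 with hε₀
  have hε₀nn : 0 ≤ ε₀ := by positivity
  have hgrad := hasGradAux α x
  have hgradval : gradient f x = (α * ‖x‖ ^ 2) • x := hgrad.gradient
  have hnormgrad : ‖gradient f x‖ = ε₀ := by
    rw [hgradval, norm_smul]
    have : |α * ‖x‖ ^ 2| = α * ‖x‖ ^ 2 := abs_of_nonneg (by positivity)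
    rw [Real.norm_eq_abs, this, hε₀]
    ring
  -- gradient f x ∈ goldsteinSubdiff f x ε₀
  have hmem : gradient f x ∈ goldsteinSubdiff f x ε₀ := by
    apply subset_convexHull ℝ _
    apply Set.mem_biUnion (Metric.mem_closedBall_self hε₀nn)
    apply subset_closure
    apply subset_convexHull ℝ _
    exact ⟨fun _ => x, fun _ => hgrad.differentiableAt, tendsto_const_nhds, tendsto_const_nhds⟩
  have hkey : ‖goldsteinGrad f x ε₀‖ ≤ ε₀ := by
    rw [goldsteinGrad, minNorm]
    split
    · rename_i h
      calc ‖h.choose‖ ≤ ‖gradient f x‖ := h.choose_spec.2 _ hmem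
        _ = ε₀ := hnormgrad
    · simpa using hε₀nn
  apply csInf_le
  · exact ⟨0, fun ε hε => hε.1⟩
  · exact ⟨hε₀nn, hkey⟩
end

section
/- Let E be a finite-dimensional real inner product space, let x̄ ∈ E, and let ρ > 0, L > 0, δ > 0 and θ ∈ (0,1). Suppose f : E → ℝ is Lipschitz with constant L on the closed ball B(x̄, ρ) and satisfies the quadratic growth bound f(x) − f(x̄) ≥ (δ/2)·‖x − x̄‖² for all x ∈ B(x̄, ρ). Let (x_r)_{r≥0} be a sequence of points of B(x̄, ρ) such that for every r: f(x_{r+1}) ≤ f(x_r), and at least one of the inequalities f(x_{r+1}) − f(x̄) ≤ θ·(f(x_r) − f(x̄)) or ‖x_{r+1} − x̄‖ ≤ θ·‖x_r − x̄‖ holds. Then there exist constants a > 0 and b > 0 such that ‖x_r − x̄‖ ≤ a·exp(−b·√r) for all r ≥ 0. -/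
open Filter Topology Metric Set
open scoped Classical

variable {E : Type*} [NormedAddCommGroup E] [InnerProductSpace ℝ E] [FiniteDimensional ℝ E]

/-- Abstract sequence lemma: potential argument giving `q r ≳ c √r`. -/
lemma sqrt_rate_aux (c : ℝ) (hc : 0 < c) (p q : ℕ → ℝ)
    (hq0 : 0 ≤ q 0)
    (hqp : ∀ r, p r ≤ q r)
    (hpq : ∀ r, q r / 2 ≤ p r)
    (hmono : ∀ r, q r ≤ q (r + 1))
    (hstep : ∀ r, q r + c ≤ q (r + 1) ∨ p r + c ≤ p (r + 1)) :
    ∀ r : ℕ, c * (Real.sqrt r - 1) ≤ q r := by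
  have hqnn : ∀ r, 0 ≤ q r := by
    intro r
    induction r with
    | zero => exact hq0
    | succ n ih => exact ih.trans (hmono n)
  set Φ : ℕ → ℝ := fun r => (q r) ^ 2 + 4 * c * p r - 2 * c * q r with hΦ
  have hΦstep : ∀ r, Φ r + c ^ 2 ≤ Φ (r + 1) := by
    intro r
    have h1 := hqp r
    have h2 := hqp (r + 1)
    have h3 := hpq r
    have h4 := hpq (r + 1)
    have h5 := hmono r
    have h6 := hqnn r
    have h7 := hqnn (r + 1)
    rcases hstep r with h | h
    · -- q jumps by c
      have hA : (q r + c) ^ 2 ≤ (q (r + 1)) ^ 2 := by nlinarith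
      have t1 : 0 ≤ c * (2 * p (r + 1) - q (r + 1)) := by
        apply mul_nonneg hc.le; linarith
      have t2 : 0 ≤ c * (q r - p r) := by
        apply mul_nonneg hc.le; linarith
      simp only [hΦ]
      nlinarith [hA, t1, t2]
    · -- p jumps by c
      rcases le_or_gt c (q r) with hq | hq
      · have : 0 ≤ (q (r + 1) - q r) * (q (r + 1) + q r - 2 * c) := by
          apply mul_nonneg (by linarith) (by linarith)
        simp only [hΦ]
        nlinarith
      · have g1 : -(c ^ 2) ≤ (q (r + 1)) ^ 2 - 2 * c * q (r + 1) := by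
          nlinarith [sq_nonneg (q (r + 1) - c)]
        have g2 : (q r) ^ 2 - 2 * c * q r ≤ 0 := by nlinarith
        simp only [hΦ]
        nlinarith
  have hΦ0 : 0 ≤ Φ 0 := by
    have := hpq 0
    have t1 : 0 ≤ c * (2 * p 0 - q 0) := by
      apply mul_nonneg hc.le; linarith
    simp only [hΦ]; nlinarith
  have hΦr : ∀ r : ℕ, (r : ℝ) * c ^ 2 ≤ Φ r := by
    intro r
    induction r with
    | zero => simpa using hΦ0
    | succ n ih =>
      have := hΦstep n
      push_cast
      push_cast at ih
      linarith
  intro r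
  have hkey : (r : ℝ) * c ^ 2 ≤ (q r + c) ^ 2 := by
    have t2 : 0 ≤ c * (q r - p r) := mul_nonneg hc.le (by linarith [hqp r])
    have := hΦr r
    simp only [hΦ] at this
    nlinarith
  have hpos : 0 ≤ q r + c := by linarith [hqnn r]
  have : Real.sqrt ((r : ℝ) * c ^ 2) ≤ q r + c := by
    calc Real.sqrt ((r : ℝ) * c ^ 2) ≤ Real.sqrt ((q r + c) ^ 2) := Real.sqrt_le_sqrt hkey
    _ = q r + c := Real.sqrt_sq hpos
  have hs : Real.sqrt ((r : ℝ) * c ^ 2) = Real.sqrt r * c := by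
    rw [Real.sqrt_mul (Nat.cast_nonneg r), Real.sqrt_sq hc.le]
  rw [hs] at this
  nlinarith

theorem stmt12 (xbar : E) (ρ L δ θ : ℝ) (hρ : 0 < ρ) (hL : 0 < L) (hδ : 0 < δ)
    (hθ₀ : 0 < θ) (hθ₁ : θ < 1) (f : E → ℝ)
    (hf : LipschitzOnWith L.toNNReal f (Metric.closedBall xbar ρ))
    (hgrow : ∀ x ∈ Metric.closedBall xbar ρ, f x - f xbar ≥ δ / 2 * ‖x - xbar‖ ^ 2)
    (x : ℕ → E) (hxball : ∀ r : ℕ, x r ∈ Metric.closedBall xbar ρ)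
    (hdec : ∀ r : ℕ, f (x (r + 1)) ≤ f (x r))
    (hstep : ∀ r : ℕ, f (x (r + 1)) - f xbar ≤ θ * (f (x r) - f xbar) ∨
      ‖x (r + 1) - xbar‖ ≤ θ * ‖x r - xbar‖) :
    ∃ a > 0, ∃ b > 0, ∀ r : ℕ, ‖x r - xbar‖ ≤ a * Real.exp (-b * Real.sqrt r) := by
  have hxbar : xbar ∈ Metric.closedBall xbar ρ := Metric.mem_closedBall_self hρ.le
  set n : ℕ → ℝ := fun r => ‖x r - xbar‖ with hn
  set F : ℕ → ℝ := fun r => f (x r) - f xbar with hF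
  have hnr : ∀ r, ‖x r - xbar‖ = n r := fun r => rfl
  have hnρ : ∀ r, n r ≤ ρ := by
    intro r
    have := hxball r
    rw [Metric.mem_closedBall, dist_eq_norm] at this
    exact this
  have hFg : ∀ r, δ / 2 * (n r) ^ 2 ≤ F r := fun r => hgrow (x r) (hxball r)
  have hFL : ∀ r, F r ≤ L * n r := by
    intro r
    have h := hf.dist_le_mul (x r) (hxball r) xbar hxbar
    rw [Real.coe_toNNReal L hL.le, dist_eq_norm, dist_eq_norm] at h
    calc F r ≤ |f (x r) - f xbar| := le_abs_self _
    _ ≤ L * ‖x r - xbar‖ := h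
  have hFmono : ∀ r, F (r + 1) ≤ F r := fun r => by
    simp only [hF]; linarith [hdec r]
  have hstep2 : ∀ r, F (r + 1) ≤ θ * F r ∨ n (r + 1) ≤ θ * n r := fun r => hstep r
  clear_value n F
  by_cases hpos : ∀ r, 0 < F r
  · -- main case
    set B : ℝ := max (2 * L / δ) ρ with hB
    have hB1 : 2 * L / δ ≤ B := le_max_left _ _
    have hB2 : ρ ≤ B := le_max_right _ _
    have hBpos : 0 < B := lt_of_lt_of_le hρ hB2
    have hnpos : ∀ r, 0 < n r := by
      intro r
      have h1 := hFL r
      have h2 := hpos r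
      nlinarith
    set c : ℝ := -Real.log θ with hc
    have hcpos : 0 < c := by
      rw [hc, neg_pos]
      exact Real.log_neg hθ₀ hθ₁
    clear_value B c
    have hLB : Real.log (L * B) = Real.log L + Real.log B :=
      Real.log_mul hL.ne' hBpos.ne'
    have hqp : ∀ r, Real.log B - Real.log (n r) ≤ Real.log (L * B) - Real.log (F r) := by
      intro r
      have h1 : Real.log (F r) ≤ Real.log (L * n r) :=
        Real.log_le_log (hpos r) (hFL r)
      rw [Real.log_mul hL.ne' (hnpos r).ne'] at h1
      linarith
    have hpq : ∀ r, (Real.log (L * B) - Real.log (F r)) / 2 ≤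
        Real.log B - Real.log (n r) := by
      intro r
      have h0 : (0:ℝ) < 2 * L / δ := by positivity
      have h1 : L * (n r) ^ 2 ≤ 2 * L / δ * F r := by
        have h2 := mul_le_mul_of_nonneg_left (hFg r) h0.le
        calc L * (n r) ^ 2 = 2 * L / δ * (δ / 2 * (n r) ^ 2) := by
              field_simp
        _ ≤ 2 * L / δ * F r := h2
      have h3 : 2 * L / δ * F r ≤ B * F r :=
        mul_le_mul_of_nonneg_right hB1 (hpos r).le
      have harg : L * B * (n r) ^ 2 ≤ B ^ 2 * F r := by
        calc L * B * (n r) ^ 2 = B * (L * (n r) ^ 2) := by ring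
        _ ≤ B * (B * F r) := mul_le_mul_of_nonneg_left (h1.trans h3) hBpos.le
        _ = B ^ 2 * F r := by ring
      have hlpos : 0 < L * B * (n r) ^ 2 :=
        mul_pos (mul_pos hL hBpos) (pow_pos (hnpos r) 2)
      have h4 : Real.log (L * B * (n r) ^ 2) ≤ Real.log (B ^ 2 * F r) :=
        Real.log_le_log hlpos harg
      rw [Real.log_mul (mul_pos hL hBpos).ne' (pow_pos (hnpos r) 2).ne',
          Real.log_mul (pow_pos hBpos 2).ne' (hpos r).ne',
          Real.log_pow, Real.log_pow] at h4
      push_cast at h4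
      linarith
    have hQ : ∀ r : ℕ, c * (Real.sqrt r - 1) ≤ Real.log (L * B) - Real.log (F r) := by
      apply sqrt_rate_aux c hcpos (fun r => Real.log B - Real.log (n r))
        (fun r => Real.log (L * B) - Real.log (F r))
      · -- q 0 ≥ 0
        have h1 : F 0 ≤ L * B := by nlinarith [hFL 0, hnρ 0]
        have h2 : Real.log (F 0) ≤ Real.log (L * B) := Real.log_le_log (hpos 0) h1
        simpa using sub_nonneg.2 h2
      · exact hqp
      · exact hpq
      · intro r
        have := Real.log_le_log (hpos (r + 1)) (hFmono r)
        linarith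
      · intro r
        rcases hstep2 r with h | h
        · left
          have h1 : Real.log (F (r + 1)) ≤ Real.log (θ * F r) :=
            Real.log_le_log (hpos (r + 1)) h
          rw [Real.log_mul hθ₀.ne' (hpos r).ne'] at h1
          rw [hc]
          linarith
        · right
          have h1 : Real.log (n (r + 1)) ≤ Real.log (θ * n r) :=
            Real.log_le_log (hnpos (r + 1)) h
          rw [Real.log_mul hθ₀.ne' (hnpos r).ne'] at h1
          rw [hc]
          linarith
    refine ⟨B * Real.exp (c / 2), by positivity, c / 2, by linarith, ?_⟩
    intro r
    have hQ' : c * Real.sqrt r - c ≤ 2 * Real.log B - 2 * Real.log (n r) := by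
      have h1 := hQ r
      have h2 := hpq r
      nlinarith
    have hlog : Real.log (n r) ≤ Real.log B + c / 2 + -(c / 2) * Real.sqrt r := by
      nlinarith [hQ']
    rw [hnr r]
    calc n r = Real.exp (Real.log (n r)) := (Real.exp_log (hnpos r)).symm
    _ ≤ Real.exp (Real.log B + c / 2 + -(c / 2) * Real.sqrt r) := Real.exp_le_exp.2 hlog
    _ = B * Real.exp (c / 2) * Real.exp (-(c / 2) * Real.sqrt r) := by
        rw [Real.exp_add, Real.exp_add, Real.exp_log hBpos]
  · -- degenerate case: F hits 0
    push_neg at hpos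
    obtain ⟨r₀, hr₀⟩ := hpos
    have hFanti : ∀ s t : ℕ, s ≤ t → F t ≤ F s := by
      intro s t hst
      induction t with
      | zero => simp [Nat.le_zero.1 hst]
      | succ m ih =>
        rcases Nat.lt_or_ge s (m + 1) with h | h
        · exact (hFmono m).trans (ih (Nat.lt_succ_iff.1 h))
        · have : s = m + 1 := le_antisymm hst h
          simp [this]
    refine ⟨(ρ + 1) * Real.exp (Real.sqrt r₀), by positivity, 1, one_pos, ?_⟩
    intro r
    rw [hnr r]
    rcases Nat.lt_or_ge r r₀ with h | h
    · have h1 : Real.sqrt r ≤ Real.sqrt r₀ :=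
        Real.sqrt_le_sqrt (by exact_mod_cast h.le)
      have h2 : (1 : ℝ) ≤ Real.exp (Real.sqrt r₀) * Real.exp (-1 * Real.sqrt r) := by
        rw [← Real.exp_add]
        apply Real.one_le_exp
        linarith
      calc n r ≤ ρ := hnρ r
      _ ≤ (ρ + 1) * 1 := by linarith
      _ ≤ (ρ + 1) * (Real.exp (Real.sqrt r₀) * Real.exp (-1 * Real.sqrt r)) := by
          apply mul_le_mul_of_nonneg_left h2 (by linarith)
      _ = (ρ + 1) * Real.exp (Real.sqrt r₀) * Real.exp (-1 * Real.sqrt r) := by ring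
    · have hFr : F r ≤ 0 := (hFanti r₀ r h).trans hr₀
      have hn2 : (n r) ^ 2 ≤ 0 := by nlinarith [hFg r]
      have hn0 : n r = 0 :=
        pow_eq_zero_iff (n := 2) (by norm_num) |>.1
          (le_antisymm hn2 (sq_nonneg (n r)))
      rw [hn0]
      positivity
end
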